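/- arXiv:2208.09264 — 4 statements merged into one kernel-verified Lean document; each statement's English description precedes it below -/
import Mathlib

section
/- Let T = (a,b) be a bounded open interval, p a natural number, and u a polynomial of degree at most p restricted to T. Then the supremum norm of u on T is at most (p+1)/√(b−a) times the L² norm of u on T. -/
open Polynomial intervalIntegral MeasureTheory Finset

lemma pii (q : ℝ[X]) (a b : ℝ) : IntervalIntegrable (fun x => q.eval x) volume a b :=
  (q.continuous_aeval).intervalIntegrable a b

lemma ibp01 (f g : ℝ[X]) :
    ∫ x in (0:ℝ)..1, (derivative f).eval x * g.eval x
      = f.eval 1 * g.eval 1 - f.eval 0 * g.eval 0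
        - ∫ x in (0:ℝ)..1, f.eval x * (derivative g).eval x := by
  have h := intervalIntegral.integral_mul_deriv_eq_deriv_mul
    (a := (0:ℝ)) (b := (1:ℝ))
    (u := fun x => g.eval x) (v := fun x => f.eval x)
    (u' := fun x => (derivative g).eval x) (v' := fun x => (derivative f).eval x)
    (fun x _ => g.hasDerivAt x) (fun x _ => f.hasDerivAt x)
    (pii _ _ _) (pii _ _ _)
  have e1 : ∫ x in (0:ℝ)..1, (derivative f).eval x * g.eval x
      = ∫ x in (0:ℝ)..1, g.eval x * (derivative f).eval x := by
    simp [mul_comm]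
  have e2 : ∫ x in (0:ℝ)..1, f.eval x * (derivative g).eval x
      = ∫ x in (0:ℝ)..1, (derivative g).eval x * f.eval x := by
    simp [mul_comm]
  rw [e1, e2]; linarith [h]

lemma beta01 (b a : ℕ) :
    ∫ x in (0:ℝ)..1, x ^ a * (x - 1) ^ b
      = (-1) ^ b * a.factorial * b.factorial / (a + b + 1).factorial := by
  induction b generalizing a with
  | zero =>
    simp only [pow_zero, mul_one, integral_pow, one_pow, zero_pow, Nat.factorial_zero,
      Nat.factorial]
    have h1 : ((a+1).factorial : ℝ) = (a+1) * a.factorial := by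
      rw [Nat.factorial_succ]; push_cast; ring
    have h2 : ((a:ℝ)+1) ≠ 0 := by positivity
    have h3 : (a.factorial : ℝ) ≠ 0 := by
      exact_mod_cast a.factorial_pos.ne'
    rw [zero_pow (by omega : a + 1 ≠ 0)]
    push_cast [Nat.factorial_succ]
    field_simp
    norm_num
  | succ b ih =>
    have h := ibp01 (C ((a+1:ℝ)⁻¹) * X^(a+1)) ((X - 1 : ℝ[X])^(b+1))
    have ha1 : ((a:ℝ)+1) ≠ 0 := by positivity
    have hd : derivative (C ((a+1:ℝ)⁻¹) * X^(a+1)) = C (1:ℝ) * X ^ a := by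
      rw [derivative_C_mul, derivative_X_pow]
      rw [show a + 1 - 1 = a from rfl, ← mul_assoc, ← C_mul]
      push_cast
      rw [inv_mul_cancel₀ ha1]
    rw [hd] at h
    have hd2 : derivative ((X - 1 : ℝ[X])^(b+1)) = C ((b:ℝ)+1) * (X-1)^b := by
      rw [derivative_pow]
      simp
    rw [hd2] at h
    simp only [eval_mul, eval_pow, eval_C, eval_X, eval_sub, eval_one, one_mul] at h
    norm_num at h
    -- h : ∫ x^a * (x-1)^(b+1) = - ∫ (a+1)⁻¹ x^(a+1) * ((b+1)(x-1)^b)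
    have e1 : ∫ x in (0:ℝ)..1, ((a:ℝ)+1)⁻¹ * x^(a+1) * (((b:ℝ)+1) * (x-1)^b)
        = ((a:ℝ)+1)⁻¹ * ((b:ℝ)+1) * ∫ x in (0:ℝ)..1, x^(a+1) * (x-1)^b := by
      rw [← intervalIntegral.integral_const_mul]
      congr 1; ext x; ring
    rw [e1, ih (a+1)] at h
    rw [h]
    have hb1 : ((b:ℝ)+1) ≠ 0 := by positivity
    have hf1 : ((a + (b+1) + 1).factorial : ℝ) = ((a:ℝ) + b + 2) * ((a+1) + b).factorial := by
      rw [show a + (b+1) + 1 = ((a+1)+b) + 1 by omega, Nat.factorial_succ]; push_cast; ring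
    have hf2 : (((a+1) + b + 1).factorial : ℝ) = ((a:ℝ) + b + 2) * ((a+1) + b).factorial := by
      rw [Nat.factorial_succ]; push_cast; ring
    have hf3 : (((a+1)).factorial : ℝ) = ((a:ℝ)+1) * a.factorial := by
      rw [Nat.factorial_succ]; push_cast; ring
    have hf4 : ((b+1).factorial : ℝ) = ((b:ℝ)+1) * b.factorial := by
      rw [Nat.factorial_succ]; push_cast; ring
    have hne : (((a+1) + b).factorial : ℝ) ≠ 0 := by
      exact_mod_cast (Nat.factorial_pos _).ne'
    rw [hf1, hf2, hf3, hf4]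
    have hab2 : ((a:ℝ) + b + 2) ≠ 0 := by positivity
    field_simp
    ring

noncomputable def FF (j : ℕ) : ℝ[X] := (X * (X - 1)) ^ j

lemma FF_dvd (j i : ℕ) (h : i ≤ j) :
    ∃ g : ℝ[X], derivative^[i] (FF j) = (X * (X - 1)) ^ (j - i) * g := by
  induction i with
  | zero => exact ⟨1, by simp [FF]⟩
  | succ i ih =>
    obtain ⟨g, hg⟩ := ih (le_of_lt (Nat.lt_of_succ_le h))
    refine ⟨(j - i : ℕ) • ((2 • X - 1) * g) + X * (X - 1) * derivative g, ?_⟩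
    rw [Function.iterate_succ_apply', hg]
    have hji : j - i = (j - (i+1)) + 1 := by omega
    rw [hji]
    rw [derivative_mul, derivative_pow]
    simp only [derivative_mul, derivative_X, derivative_sub, derivative_one, Nat.cast_id]
    ring_nf
    simp [smul_eq_C_mul]
    ring

lemma FF_eval0 (j i : ℕ) (h : i < j) : (derivative^[i] (FF j)).eval 0 = 0 := by
  obtain ⟨g, hg⟩ := FF_dvd j i h.le
  rw [hg]
  have : j - i ≠ 0 := by omega
  simp [this, zero_pow]

lemma FF_eval1 (j i : ℕ) (h : i < j) : (derivative^[i] (FF j)).eval 1 = 0 := by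
  obtain ⟨g, hg⟩ := FF_dvd j i h.le
  rw [hg]
  have : j - i ≠ 0 := by omega
  simp [this, zero_pow]

lemma ibp_iter (j m : ℕ) (hm : m ≤ j) (g : ℝ[X]) :
    ∫ x in (0:ℝ)..1, (derivative^[j] (FF j)).eval x * g.eval x
      = (-1) ^ m * ∫ x in (0:ℝ)..1,
          (derivative^[j - m] (FF j)).eval x * (derivative^[m] g).eval x := by
  induction m generalizing g with
  | zero => simp
  | succ m ih =>
    rw [ih (le_of_lt (Nat.lt_of_succ_le hm)) g]
    have hj : j - m = (j - (m+1)) + 1 := by omega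
    have h := ibp01 (derivative^[j - (m+1)] (FF j)) (derivative^[m] g)
    rw [← Function.iterate_succ_apply' derivative] at h
    simp only [Nat.succ_eq_add_one] at h
    rw [← hj] at h
    rw [FF_eval0 j (j - (m+1)) (by omega), FF_eval1 j (j - (m+1)) (by omega)] at h
    rw [h, ← Function.iterate_succ_apply' derivative]
    ring

lemma moment_lt (j k : ℕ) (h : k < j) :
    ∫ x in (0:ℝ)..1, (derivative^[j] (FF j)).eval x * x ^ k = 0 := by
  have := ibp_iter j (k+1) h (X ^ k : ℝ[X])
  have hz : derivative^[k+1] (X ^ k : ℝ[X]) = 0 := by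
    apply iterate_derivative_eq_zero
    simpa using Nat.lt_succ_self k
  rw [hz] at this
  simpa using this

lemma moment_ge (j k : ℕ) (h : j ≤ k) :
    ∫ x in (0:ℝ)..1, (derivative^[j] (FF j)).eval x * x ^ k
      = (k.factorial : ℝ)^2 * j.factorial / ((k-j).factorial * (k+j+1).factorial) := by
  have := ibp_iter j j le_rfl (X ^ k : ℝ[X])
  rw [iterate_derivative_X_pow_eq_C_mul] at this
  simp only [Nat.sub_self, Function.iterate_zero_apply] at this
  simp only [eval_mul, eval_pow, eval_C, eval_X, eval_mul, eval_sub, eval_one, FF] at this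
  have e : ∫ x in (0:ℝ)..1, (x * (x-1))^j * ((k.descFactorial j : ℝ) * x ^ (k-j))
      = (k.descFactorial j : ℝ) * ∫ x in (0:ℝ)..1, x ^ k * (x-1)^j := by
    rw [← intervalIntegral.integral_const_mul]
    congr 1; ext x
    rw [mul_pow]
    rw [show x^j * (x-1)^j * ((k.descFactorial j : ℝ) * x^(k-j))
        = (k.descFactorial j : ℝ) * ((x^j * x^(k-j)) * (x-1)^j) by ring, ← pow_add]
    rw [Nat.add_sub_cancel' h]
  rw [e, beta01] at this
  rw [FF, this]
  have hdf : ((k-j).factorial : ℝ) * (k.descFactorial j : ℝ) = k.factorial := by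
    exact_mod_cast congrArg (Nat.cast : ℕ → ℝ) (Nat.factorial_mul_descFactorial h)
  have h1 : ((k-j).factorial : ℝ) ≠ 0 := by exact_mod_cast (Nat.factorial_pos _).ne'
  have h2 : ((k+j+1).factorial : ℝ) ≠ 0 := by exact_mod_cast (Nat.factorial_pos _).ne'
  field_simp
  rw [mul_assoc, mul_comm (k.descFactorial j : ℝ), hdf, ← pow_mul, mul_comm j 2, pow_mul, neg_one_sq, one_pow, one_mul]

lemma tele (k : ℕ) :
    ∑ j ∈ Finset.range (k+1),
        (2*(j:ℝ)+1) * (k.factorial:ℝ)^2 / ((k-j).factorial * (k+j+1).factorial) = 1 := by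
  set A : ℕ → ℝ := fun j =>
    if j ≤ k then (k.factorial:ℝ)^2 / ((k-j).factorial * (k+j).factorial) else 0 with hA
  have key : ∀ j ∈ Finset.range (k+1),
      (2*(j:ℝ)+1) * (k.factorial:ℝ)^2 / ((k-j).factorial * (k+j+1).factorial)
        = A j - A (j+1) := by
    intro j hj
    rw [Finset.mem_range] at hj
    have hjk : j ≤ k := by omega
    rcases eq_or_lt_of_le hjk with rfl | hlt
    · have h1 : ¬ (j + 1 ≤ j) := by omega
      simp only [hA, if_pos le_rfl, if_neg h1, Nat.sub_self, Nat.factorial_zero, sub_zero]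
      have h2 : (j + j + 1).factorial = (j + j + 1) * (j + j).factorial := Nat.factorial_succ _
      rw [h2]
      have h3 : ((j+j).factorial : ℝ) ≠ 0 := by exact_mod_cast (Nat.factorial_pos _).ne'
      have h4 : ((j:ℝ) + j + 1) ≠ 0 := by positivity
      push_cast
      field_simp
      ring
    · have h1 : j + 1 ≤ k := hlt
      simp only [hA, if_pos hjk, if_pos h1]
      have e1 : k - j = (k - (j+1)) + 1 := by omega
      have e2 : (k - j).factorial = (k - j) * (k - (j+1)).factorial := by
        rw [e1, Nat.factorial_succ, ← e1]
      have e3 : (k + (j+1)).factorial = (k + j + 1) * (k + j).factorial := by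
        rw [show k + (j+1) = (k+j) + 1 by omega, Nat.factorial_succ]
      have e4 : (k + j + 1).factorial = (k + j + 1) * (k + j).factorial := Nat.factorial_succ _
      rw [e2, e3, e4]
      have c1 : ((k - j : ℕ) : ℝ) = (k:ℝ) - j := by
        push_cast [Nat.cast_sub hjk]; ring
      have n1 : ((k - (j+1)).factorial : ℝ) ≠ 0 := by exact_mod_cast (Nat.factorial_pos _).ne'
      have n2 : ((k + j).factorial : ℝ) ≠ 0 := by exact_mod_cast (Nat.factorial_pos _).ne'
      have n3 : ((k:ℝ) - j) ≠ 0 := by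
        have : (j:ℝ) < k := by exact_mod_cast hlt
        linarith
      have n4 : ((k:ℝ) + j + 1) ≠ 0 := by positivity
      push_cast [c1]
      field_simp
      ring
  rw [Finset.sum_congr rfl key, Finset.sum_range_sub' A (k+1)]
  have hk0 : A 0 = 1 := by
    simp only [hA, if_pos (Nat.zero_le k), Nat.sub_zero, Nat.add_zero]
    have : ((k.factorial : ℝ)) ≠ 0 := by exact_mod_cast (Nat.factorial_pos _).ne'
    field_simp
  have hk1 : A (k+1) = 0 := by simp [hA]
  rw [hk0, hk1, sub_zero]

noncomputable def KK (p : ℕ) : ℝ[X] :=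
  ∑ j ∈ Finset.range (p+1), ((2*(j:ℝ)+1) / j.factorial) • derivative^[j] (FF j)

lemma KK_moment (p k : ℕ) (hk : k ≤ p) :
    ∫ x in (0:ℝ)..1, (KK p).eval x * x ^ k = 1 := by
  have e1 : ∀ x : ℝ, (KK p).eval x * x ^ k
      = ∑ j ∈ Finset.range (p+1),
          ((2*(j:ℝ)+1) / j.factorial) * ((derivative^[j] (FF j)).eval x * x ^ k) := by
    intro x
    rw [KK, eval_finset_sum, Finset.sum_mul]
    congr 1; ext j
    simp [mul_assoc]
  simp_rw [e1]
  rw [intervalIntegral.integral_finset_sum]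
  · have e2 : ∀ j ∈ Finset.range (p+1),
        ∫ x in (0:ℝ)..1, ((2*(j:ℝ)+1) / j.factorial) * ((derivative^[j] (FF j)).eval x * x ^ k)
          = ((2*(j:ℝ)+1) / j.factorial) * ∫ x in (0:ℝ)..1, (derivative^[j] (FF j)).eval x * x ^ k := by
      intro j _
      exact intervalIntegral.integral_const_mul _ _
    rw [Finset.sum_congr rfl e2]
    have hzero : ∀ j ∈ Finset.range (p+1), j ∉ Finset.range (k+1) →
        ((2*(j:ℝ)+1) / j.factorial) * ∫ x in (0:ℝ)..1, (derivative^[j] (FF j)).eval x * x ^ k = 0 := by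
      intro j _ hj
      rw [Finset.mem_range, not_lt] at hj
      rw [moment_lt j k (by omega)]
      ring
    rw [← Finset.sum_subset (Finset.range_subset_range.mpr (by omega : k + 1 ≤ p + 1)) hzero]
    · have e3 : ∀ j ∈ Finset.range (k+1),
          ((2*(j:ℝ)+1) / j.factorial) * ∫ x in (0:ℝ)..1, (derivative^[j] (FF j)).eval x * x ^ k
            = (2*(j:ℝ)+1) * (k.factorial:ℝ)^2 / ((k-j).factorial * (k+j+1).factorial) := by
        intro j hj
        rw [Finset.mem_range, Nat.lt_succ] at hj
        rw [moment_ge j k hj]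
        have : (j.factorial : ℝ) ≠ 0 := by exact_mod_cast (Nat.factorial_pos _).ne'
        field_simp
      rw [Finset.sum_congr rfl e3, tele]
  · intro j _
    exact (continuous_const.mul (((derivative^[j] (FF j)).continuous_aeval).mul
      (continuous_pow k))).intervalIntegrable _ _

lemma KK_natDegree (p : ℕ) : (KK p).natDegree ≤ p := by
  apply Polynomial.natDegree_sum_le_of_forall_le
  intro j hj
  rw [Finset.mem_range, Nat.lt_succ] at hj
  refine le_trans (natDegree_smul_le _ _) ?_
  refine le_trans (natDegree_iterate_derivative _ _) ?_
  have h2 : (X * (X - 1) : ℝ[X]).natDegree ≤ 2 := by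
    refine le_trans (natDegree_mul_le) ?_
    have : (X - 1 : ℝ[X]) = X - C 1 := by simp
    rw [this, natDegree_X, natDegree_X_sub_C]
  have : (FF j).natDegree ≤ 2 * j := by
    rw [FF]
    refine le_trans (natDegree_pow_le) ?_
    calc j * (X * (X - 1) : ℝ[X]).natDegree ≤ j * 2 := Nat.mul_le_mul_left j h2
    _ = 2 * j := by omega
  omega

lemma eval_as_sum (p : ℕ) (q : ℝ[X]) (hq : q.natDegree ≤ p) (x : ℝ) :
    q.eval x = ∑ i ∈ Finset.range (p+1), q.coeff i * x ^ i := by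
  conv_lhs => rw [Polynomial.as_sum_range' q (p+1) (Nat.lt_succ_of_le hq)]
  rw [eval_finset_sum]
  refine Finset.sum_congr rfl fun i _ => ?_
  simp [eval_monomial]

lemma KK_reproducing (p : ℕ) (q : ℝ[X]) (hq : q.natDegree ≤ p) :
    ∫ x in (0:ℝ)..1, (KK p).eval x * q.eval x = q.eval 1 := by
  have e1 : ∀ x : ℝ, (KK p).eval x * q.eval x
      = ∑ i ∈ Finset.range (p+1), q.coeff i * ((KK p).eval x * x ^ i) := by
    intro x
    rw [eval_as_sum p q hq x, Finset.mul_sum]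
    refine Finset.sum_congr rfl fun i _ => ?_
    ring
  simp_rw [e1]
  rw [intervalIntegral.integral_finset_sum]
  · have e2 : ∀ i ∈ Finset.range (p+1),
        (∫ x in (0:ℝ)..1, q.coeff i * ((KK p).eval x * x ^ i)) = q.coeff i := by
      intro i hi
      rw [Finset.mem_range, Nat.lt_succ] at hi
      rw [intervalIntegral.integral_const_mul, KK_moment p i hi, mul_one]
    rw [Finset.sum_congr rfl e2, eval_as_sum p q hq 1]
    simp
  · intro i _
    exact (continuous_const.mul (((KK p).continuous_aeval).mul
      (continuous_pow i))).intervalIntegrable _ _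

lemma sum_odd (n : ℕ) : ∑ j ∈ Finset.range n, (2*(j:ℝ)+1) = (n:ℝ)^2 := by
  induction n with
  | zero => simp
  | succ n ih => rw [Finset.sum_range_succ, ih]; push_cast; ring

lemma KK_eval_one (p : ℕ) : (KK p).eval 1 = ((p:ℝ)+1)^2 := by
  have comp_shift : ∀ n : ℕ, ∀ f : ℝ[X],
      derivative^[n] (f.comp (X + 1)) = (derivative^[n] f).comp (X + 1) := by
    intro n
    induction n with
    | zero => intro f; simp
    | succ n ih =>
      intro f
      rw [Function.iterate_succ_apply, Function.iterate_succ_apply']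
      have hd : derivative (f.comp (X + 1)) = (derivative f).comp (X + 1) := by
        rw [derivative_comp]; simp
      rw [hd, ih f.derivative, ← Function.iterate_succ_apply, Function.iterate_succ_apply']
  have eval1 : ∀ j : ℕ, (derivative^[j] (FF j)).eval 1 = j.factorial := by
    intro j
    have hcomp : (FF j).comp (X + 1) = ((X + 1) * X) ^ j := by
      rw [FF]
      simp [mul_comp, pow_comp, sub_comp, X_comp, one_comp]
    have h1 : (derivative^[j] (FF j)).eval 1 = ((derivative^[j] (FF j)).comp (X+1)).eval 0 := by
      simp [eval_comp]
    rw [h1, ← comp_shift, hcomp]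
    rw [← Polynomial.coeff_zero_eq_eval_zero, Polynomial.coeff_iterate_derivative]
    have hco : ((X + 1 : ℝ[X]) ^ j).coeff 0 = 1 := by
      rw [Polynomial.coeff_zero_eq_eval_zero]; simp
    have hc2 := Polynomial.coeff_mul_X_pow ((X + 1 : ℝ[X]) ^ j) j 0
    rw [mul_pow]
    rw [Nat.zero_add] at hc2
    simp only [Nat.zero_add]
    rw [hc2, hco, Nat.descFactorial_self]
    simp
  rw [KK, eval_finset_sum]
  have e : ∀ j ∈ Finset.range (p+1),
      (((2*(j:ℝ)+1) / j.factorial) • derivative^[j] (FF j)).eval 1 = 2*(j:ℝ)+1 := by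
    intro j _
    rw [eval_smul, eval1 j, smul_eq_mul]
    have : (j.factorial : ℝ) ≠ 0 := by exact_mod_cast (Nat.factorial_pos _).ne'
    field_simp
  rw [Finset.sum_congr rfl e, sum_odd]
  push_cast; ring

lemma endpoint01 (p : ℕ) (q : ℝ[X]) (hq : q.natDegree ≤ p) :
    (q.eval 1)^2 ≤ ((p:ℝ)+1)^2 * ∫ x in (0:ℝ)..1, (q.eval x)^2 := by
  set A : ℝ := ((p:ℝ)+1)^2 with hAdef
  set B : ℝ := q.eval 1 with hBdef
  set C : ℝ := ∫ x in (0:ℝ)..1, (q.eval x)^2 with hCdef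
  have hA0 : 0 < A := by positivity
  have hKK : ∫ x in (0:ℝ)..1, (KK p).eval x * (KK p).eval x = A := by
    rw [KK_reproducing p (KK p) (KK_natDegree p), KK_eval_one]
  have hKq : ∫ x in (0:ℝ)..1, (KK p).eval x * q.eval x = B := KK_reproducing p q hq
  set t : ℝ := -B / A with htdef
  have i1 : IntervalIntegrable (fun x => (KK p).eval x * (KK p).eval x) volume 0 1 :=
    (((KK p).continuous_aeval).mul ((KK p).continuous_aeval)).intervalIntegrable _ _
  have i2 : IntervalIntegrable (fun x => (KK p).eval x * q.eval x) volume 0 1 :=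
    (((KK p).continuous_aeval).mul (q.continuous_aeval)).intervalIntegrable _ _
  have i3 : IntervalIntegrable (fun x => (q.eval x)^2) volume 0 1 :=
    ((q.continuous_aeval).pow 2).intervalIntegrable _ _
  have i1' : IntervalIntegrable (fun x => t^2 * ((KK p).eval x * (KK p).eval x)) volume 0 1 :=
    i1.const_mul _
  have i2' : IntervalIntegrable (fun x => 2*t * ((KK p).eval x * q.eval x)) volume 0 1 :=
    i2.const_mul _
  have expand : ∫ x in (0:ℝ)..1, (t * (KK p).eval x + q.eval x)^2
      = t^2 * A + 2*t*B + C := by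
    have e : ∀ x : ℝ, (t * (KK p).eval x + q.eval x)^2
        = t^2 * ((KK p).eval x * (KK p).eval x) + 2*t * ((KK p).eval x * q.eval x)
          + (q.eval x)^2 := by intro x; ring
    simp_rw [e]
    rw [intervalIntegral.integral_add (i1'.add i2') i3,
      intervalIntegral.integral_add i1' i2',
      intervalIntegral.integral_const_mul, intervalIntegral.integral_const_mul, hKK, hKq]
  have h0 : 0 ≤ ∫ x in (0:ℝ)..1, (t * (KK p).eval x + q.eval x)^2 := by
    apply intervalIntegral.integral_nonneg (by norm_num)
    intro x _
    positivity
  rw [expand] at h0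
  have hval : t^2 * A + 2*t*B + C = C - B^2 / A := by
    rw [htdef]; field_simp; ring
  rw [hval] at h0
  have : B^2 / A ≤ C := by linarith
  calc B^2 = (B^2 / A) * A := by field_simp
  _ ≤ C * A := by apply mul_le_mul_of_nonneg_right this hA0.le
  _ = A * C := by ring

lemma endpointRight (p : ℕ) (q : ℝ[X]) (a b : ℝ) (hab : a < b) (hq : q.natDegree ≤ p) :
    (q.eval b)^2 * (b - a) ≤ ((p:ℝ)+1)^2 * ∫ x in a..b, (q.eval x)^2 := by
  have hL : b - a ≠ 0 := by linarith
  set qt : ℝ[X] := q.comp (C (b-a) * X + C a) with hqt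
  have hdeg : qt.natDegree ≤ p := by
    refine le_trans (natDegree_comp_le) ?_
    have h1 : (C (b-a) * X + C a).natDegree ≤ 1 := natDegree_linear_le
    calc q.natDegree * (C (b-a) * X + C a).natDegree ≤ q.natDegree * 1 :=
      Nat.mul_le_mul_left _ h1
    _ ≤ p := by omega
  have heval : ∀ x : ℝ, qt.eval x = q.eval ((b-a) * x + a) := by
    intro x; rw [hqt, eval_comp]; simp
  have h := endpoint01 p qt hdeg
  rw [heval 1] at h
  have e1 : qt.eval 1 = q.eval b  := by rw [heval]; ring_nf
  have e2 : (∫ x in (0:ℝ)..1, (qt.eval x)^2)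
      = (b-a)⁻¹ * ∫ x in a..b, (q.eval x)^2 := by
    have : ∀ x : ℝ, (qt.eval x)^2 = (fun y => (q.eval y)^2) ((b-a) * x + a) := by
      intro x; rw [heval]
    simp_rw [this]
    rw [intervalIntegral.integral_comp_mul_add (fun y => (q.eval y)^2) hL a]
    norm_num
  rw [show (b-a) * 1 + a = b by ring] at h
  rw [e2] at h
  have hba : 0 < b - a := by linarith
  calc (q.eval b)^2 * (b-a) ≤ (((p:ℝ)+1)^2 * ((b-a)⁻¹ * ∫ x in a..b, (q.eval x)^2)) * (b-a) := by
        apply mul_le_mul_of_nonneg_right h hba.le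
  _ = ((p:ℝ)+1)^2 * ∫ x in a..b, (q.eval x)^2 := by field_simp

lemma endpointLeft (p : ℕ) (q : ℝ[X]) (a b : ℝ) (hab : a < b) (hq : q.natDegree ≤ p) :
    (q.eval a)^2 * (b - a) ≤ ((p:ℝ)+1)^2 * ∫ x in a..b, (q.eval x)^2 := by
  set qr : ℝ[X] := q.comp (C (a+b) - X) with hqr
  have hdeg : qr.natDegree ≤ p := by
    refine le_trans (natDegree_comp_le) ?_
    have h1 : (C (a+b) - X : ℝ[X]).natDegree ≤ 1 := by
      have : (C (a+b) - X : ℝ[X]) = -(X - C (a+b)) := by ring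
      rw [this, natDegree_neg, natDegree_X_sub_C]
    calc q.natDegree * (C (a+b) - X : ℝ[X]).natDegree ≤ q.natDegree * 1 :=
      Nat.mul_le_mul_left _ h1
    _ ≤ p := by omega
  have heval : ∀ x : ℝ, qr.eval x = q.eval ((a+b) - x) := by
    intro x; rw [hqr, eval_comp]; simp
  have h := endpointRight p qr a b hab hdeg
  rw [heval b, show a + b - b = a by ring] at h
  have e2 : (∫ x in a..b, (qr.eval x)^2) = ∫ x in a..b, (q.eval x)^2 := by
    have : ∀ x : ℝ, (qr.eval x)^2 = (fun y => (q.eval y)^2) ((a+b) - x) := by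
      intro x; rw [heval]
    simp_rw [this]
    rw [intervalIntegral.integral_comp_sub_left (fun y => (q.eval y)^2) (a+b)]
    rw [show a + b - b = a by ring, show a + b - a = b by ring]
  rw [e2] at h
  exact h

theorem sup_norm_le_L2_norm_poly (a b : ℝ) (hab : a < b) (p : ℕ)
    (u : Polynomial ℝ) (hu : u.natDegree ≤ p) :
    ∀ t ∈ Set.Ioo a b,
      |u.eval t| ≤ ((p : ℝ) + 1) / Real.sqrt (b - a) *
        Real.sqrt (∫ s in a..b, (u.eval s) ^ 2) := by
  intro t ht
  obtain ⟨hat, htb⟩ := ht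
  have h1 := endpointRight p u a t hat hu
  have h2 := endpointLeft p u t b htb hu
  have hadd : (∫ x in a..t, (u.eval x)^2) + (∫ x in t..b, (u.eval x)^2)
      = ∫ x in a..b, (u.eval x)^2 := by
    apply intervalIntegral.integral_add_adjacent_intervals <;>
      exact ((u.continuous_aeval).pow 2).intervalIntegrable _ _
  set J : ℝ := ∫ x in a..b, (u.eval x)^2 with hJ
  have hsum : (u.eval t)^2 * (b - a) ≤ ((p:ℝ)+1)^2 * J := by
    have : (u.eval t)^2 * (t - a) + (u.eval t)^2 * (b - t)
        ≤ ((p:ℝ)+1)^2 * ((∫ x in a..t, (u.eval x)^2) + (∫ x in t..b, (u.eval x)^2)) := by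
      rw [mul_add]; exact add_le_add h1 h2
    rw [hadd] at this
    calc (u.eval t)^2 * (b - a) = (u.eval t)^2 * (t - a) + (u.eval t)^2 * (b - t) := by ring
    _ ≤ _ := this
  have hJ0 : 0 ≤ J := by
    apply intervalIntegral.integral_nonneg hab.le
    intro x _; positivity
  have hba : (0:ℝ) < b - a := by linarith
  set R : ℝ := ((p : ℝ) + 1) / Real.sqrt (b - a) * Real.sqrt J with hR
  have hR0 : 0 ≤ R := by positivity
  have hRsq : R^2 = ((p:ℝ)+1)^2 / (b-a) * J := by
    rw [hR, mul_pow, div_pow, Real.sq_sqrt hba.le, Real.sq_sqrt hJ0]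
  have habs : (u.eval t)^2 ≤ R^2 := by
    rw [hRsq]
    rw [div_mul_eq_mul_div, le_div_iff₀ hba]
    exact hsum
  calc |u.eval t| = Real.sqrt ((u.eval t)^2) := (Real.sqrt_sq_eq_abs _).symm
  _ ≤ Real.sqrt (R^2) := Real.sqrt_le_sqrt habs
  _ = R := Real.sqrt_sq hR0
end

section
/- Fix p ∈ ℕ. The minimum of (1/2)∫_{−1}^{1} v(t)² dt over all polynomials v of degree at most p satisfying v(1) = 1 equals 1/(p+1)². -/
open Polynomial Nat

noncomputable def gpPoly (p : ℕ) : ℝ[X] := (X - C 1) ^ p * (X - C (-1)) ^ (p + 1)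

lemma iter_deriv_add (k : ℕ) (f g : ℝ[X]) :
    derivative^[k] (f + g) = derivative^[k] f + derivative^[k] g := by
  induction k generalizing f g with
  | zero => simp
  | succ k ih => rw [Function.iterate_succ_apply, Function.iterate_succ_apply,
      Function.iterate_succ_apply, derivative_add, ih]

lemma dvd_deriv {a : ℝ} {m : ℕ} {f : ℝ[X]} (h : (X - C a) ^ (m + 1) ∣ f) :
    (X - C a) ^ m ∣ derivative f := by
  obtain ⟨h', rfl⟩ := h
  rw [derivative_mul, derivative_pow, Nat.add_sub_cancel]
  refine dvd_add (Dvd.dvd.mul_right (Dvd.dvd.mul_right (dvd_mul_left _ _) _) _)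
    (Dvd.dvd.mul_right (pow_dvd_pow _ (Nat.le_succ m)) _)

lemma dvd_iter {a : ℝ} (k : ℕ) {m : ℕ} {f : ℝ[X]} (h : (X - C a) ^ (m + k) ∣ f) :
    (X - C a) ^ m ∣ derivative^[k] f := by
  induction k generalizing f with
  | zero => simpa using h
  | succ k ih =>
    rw [Function.iterate_succ_apply]
    exact ih (dvd_deriv (by rwa [show m + k + 1 = m + (k + 1) by ring]))

lemma eval_zero_of_pow_dvd {a : ℝ} {m : ℕ} (hm : 1 ≤ m) {f : ℝ[X]}
    (h : (X - C a) ^ m ∣ f) : eval a f = 0 := by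
  obtain ⟨h', rfl⟩ := h
  simp [zero_pow (by omega : m ≠ 0)]

lemma evalL (a : ℝ) : ∀ (n : ℕ) (h : ℝ[X]),
    eval a (derivative^[n] ((X - C a) ^ n * h)) = (n ! : ℝ) * eval a h := by
  intro n
  induction n with
  | zero => intro h; simp
  | succ n ih =>
    intro h
    rw [Function.iterate_succ_apply, derivative_mul, derivative_pow, Nat.add_sub_cancel,
      derivative_sub, derivative_X, derivative_C, sub_zero, mul_one, iter_deriv_add,
      eval_add, mul_assoc, iterate_derivative_C_mul, eval_C_mul, ih,
      show (X - C a) ^ (n + 1) * derivative h = (X - C a) ^ n * ((X - C a) * derivative h) by ring,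
      ih]
    simp [Nat.factorial_succ]
    ring

lemma evalM (a : ℝ) : ∀ (n : ℕ) (h : ℝ[X]),
    eval a (derivative^[n + 1] ((X - C a) ^ n * h)) =
      (n ! : ℝ) * (n + 1) * eval a (derivative h) := by
  intro n
  induction n with
  | zero => intro h; simp
  | succ n ih =>
    intro h
    rw [Function.iterate_succ_apply, derivative_mul, derivative_pow, Nat.add_sub_cancel,
      derivative_sub, derivative_X, derivative_C, sub_zero, mul_one, iter_deriv_add,
      eval_add, mul_assoc, iterate_derivative_C_mul, eval_C_mul, ih, evalL]
    push_cast [Nat.factorial_succ]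
    ring

noncomputable def Spoly (n : ℕ) (q g : ℝ[X]) : ℝ[X] :=
  ∑ i ∈ Finset.range n, C ((-1 : ℝ) ^ i) * (derivative^[i] q * derivative^[n - 1 - i] g)

lemma Spoly_succ (n : ℕ) (q g : ℝ[X]) :
    Spoly (n + 1) q g = Spoly n q (derivative g) + C ((-1 : ℝ) ^ n) * (derivative^[n] q * g) := by
  rw [Spoly, Finset.sum_range_succ, Nat.add_sub_cancel, Nat.sub_self,
    Function.iterate_zero_apply, Spoly]
  congr 1
  refine Finset.sum_congr rfl fun i hi => ?_
  have hi' : i < n := Finset.mem_range.mp hi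
  rw [show n - i = (n - 1 - i) + 1 by omega, Function.iterate_succ_apply]

lemma Spoly_deriv (n : ℕ) (q g : ℝ[X]) :
    derivative (Spoly n q g) =
      q * derivative^[n] g - C ((-1 : ℝ) ^ n) * (derivative^[n] q * g) := by
  induction n generalizing g with
  | zero => simp [Spoly]
  | succ n ih =>
    rw [Spoly_succ, derivative_add, ih, derivative_C_mul, derivative_mul,
      ← Function.iterate_succ_apply' derivative n q,
      Function.iterate_succ_apply derivative n g, pow_succ, map_mul]
    simp only [map_neg, map_one, Nat.succ_eq_add_one, Nat.add_comm 1 n]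
    ring

lemma integral_eval_deriv (f : ℝ[X]) :
    ∫ t in (-1 : ℝ)..1, eval t (derivative f) = eval 1 f - eval (-1) f := by
  have hi : IntervalIntegrable (fun t => eval t (derivative f)) MeasureTheory.volume (-1 : ℝ) 1 :=
    (Polynomial.continuous (derivative f)).intervalIntegrable _ _
  exact intervalIntegral.integral_eq_sub_of_hasDerivAt (fun t _ => f.hasDerivAt t) hi

lemma moment (p : ℕ) (q : ℝ[X]) (hq : q.natDegree ≤ p) :
    ∫ t in (-1 : ℝ)..1, eval t q * eval t (derivative^[p + 1] (gpPoly p))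
      = eval 1 q * ((p ! : ℝ) * 2 ^ (p + 1)) := by
  have hzero : derivative^[p + 1] q = 0 := iterate_derivative_eq_zero (by omega)
  have hd : derivative (Spoly (p + 1) q (gpPoly p)) = q * derivative^[p + 1] (gpPoly p) := by
    rw [Spoly_deriv, hzero]
    simp
  have hint : ∫ t in (-1 : ℝ)..1, eval t q * eval t (derivative^[p + 1] (gpPoly p))
      = eval 1 (Spoly (p + 1) q (gpPoly p)) - eval (-1) (Spoly (p + 1) q (gpPoly p)) := by
    rw [← integral_eval_deriv]
    congr 1
    funext t
    rw [hd, eval_mul]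
  have hm1 : eval (-1 : ℝ) (Spoly (p + 1) q (gpPoly p)) = 0 := by
    rw [Spoly, eval_finset_sum]
    refine Finset.sum_eq_zero fun i hi => ?_
    have hi' : i < p + 1 := Finset.mem_range.mp hi
    have hdvd : ((X : ℝ[X]) - C (-1)) ^ (i + 1) ∣ derivative^[p + 1 - 1 - i] (gpPoly p) := by
      refine dvd_iter _ ?_
      rw [show i + 1 + (p + 1 - 1 - i) = p + 1 by omega]
      exact Dvd.intro_left _ rfl
    rw [eval_mul, eval_mul, eval_zero_of_pow_dvd (by omega) hdvd]
    ring
  have h1 : eval (1 : ℝ) (Spoly (p + 1) q (gpPoly p)) = eval 1 q * ((p ! : ℝ) * 2 ^ (p + 1)) := by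
    rw [Spoly, eval_finset_sum, Finset.sum_range_succ']
    have hrest : ∀ i ∈ Finset.range p,
        eval (1 : ℝ) (C ((-1 : ℝ) ^ (i + 1)) *
          (derivative^[i + 1] q * derivative^[p + 1 - 1 - (i + 1)] (gpPoly p))) = 0 := by
      intro i hi
      have hi' : i < p := Finset.mem_range.mp hi
      have hdvd : ((X : ℝ[X]) - C 1) ^ (i + 1) ∣ derivative^[p + 1 - 1 - (i + 1)] (gpPoly p) := by
        refine dvd_iter _ ?_
        rw [show i + 1 + (p + 1 - 1 - (i + 1)) = p by omega]
        exact Dvd.intro _ rfl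
      rw [eval_mul, eval_mul, eval_zero_of_pow_dvd (by omega) hdvd]
      ring
    rw [Finset.sum_eq_zero hrest, zero_add]
    simp only [pow_zero, map_one, one_mul, Function.iterate_zero_apply, Nat.add_sub_cancel,
      Nat.sub_zero, eval_mul]
    rw [gpPoly, evalL]
    simp only [eval_pow, eval_sub, eval_X, eval_C]
    norm_num
  rw [hint, hm1, h1, sub_zero]

lemma eval_one_K (p : ℕ) :
    eval (1 : ℝ) (derivative^[p + 1] (gpPoly p)) = (p ! : ℝ) * (p + 1) ^ 2 * 2 ^ p := by
  rw [gpPoly, evalM]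
  rw [derivative_pow, derivative_sub, derivative_X, derivative_C, sub_zero, mul_one,
    Nat.add_sub_cancel]
  simp
  ring

lemma natDegree_K_le (p : ℕ) : (derivative^[p + 1] (gpPoly p)).natDegree ≤ p := by
  have b1 : ((((X : ℝ[X]) - C 1)) ^ p).natDegree ≤ p := by
    exact natDegree_pow_le.trans (by rw [natDegree_X_sub_C, mul_one])
  have b2 : ((((X : ℝ[X]) - C (-1))) ^ (p + 1)).natDegree ≤ p + 1 := by
    exact natDegree_pow_le.trans (by rw [natDegree_X_sub_C, mul_one])
  have h1 : (gpPoly p).natDegree ≤ 2 * p + 1 := natDegree_mul_le.trans (by omega)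
  have h2 := natDegree_iterate_derivative (gpPoly p) (p + 1)
  omega

theorem min_L2_poly_endpoint (p : ℕ) :
    IsLeast {J : ℝ | ∃ v : Polynomial ℝ, v.natDegree ≤ p ∧ v.eval 1 = 1 ∧
        J = (1 / 2) * ∫ t in (-1 : ℝ)..1, (v.eval t) ^ 2}
      (1 / ((p : ℝ) + 1) ^ 2) := by
  classical
  set K : ℝ[X] := derivative^[p + 1] (gpPoly p) with hK
  set N : ℝ := (p ! : ℝ) * 2 ^ (p + 1) with hNdef
  have hfac : (0 : ℝ) < (p ! : ℝ) := by exact_mod_cast Nat.factorial_pos p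
  have hN : (0 : ℝ) < N := by positivity
  have hp1 : (0 : ℝ) < ((p : ℝ) + 1) := by positivity
  set K1 : ℝ := eval 1 K with hK1def
  have hK1 : K1 = (p ! : ℝ) * ((p : ℝ) + 1) ^ 2 * 2 ^ p := by
    rw [hK1def, hK, eval_one_K]
  have hK1pos : (0 : ℝ) < K1 := by rw [hK1]; positivity
  have hKK : ∫ t in (-1 : ℝ)..1, eval t K * eval t K = K1 * N := by
    rw [moment p K (natDegree_K_le p)]
  -- continuity / integrability helpers
  have cK : Continuous fun t : ℝ => eval t K := Polynomial.continuous K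
  -- arithmetic fact
  have harith : N / K1 = 2 / ((p : ℝ) + 1) ^ 2 := by
    rw [hK1, hNdef]
    field_simp
    ring
  constructor
  · -- membership
    refine ⟨C (1 / K1) * K, ?_, ?_, ?_⟩
    · exact (natDegree_C_mul_le _ _).trans (natDegree_K_le p)
    · simp [← hK1def]
      field_simp
    · have : ∀ t : ℝ, (eval t (C (1 / K1) * K)) ^ 2
          = (1 / K1) ^ 2 * (eval t K * eval t K) := by
        intro t; rw [eval_mul, eval_C]; ring
      rw [intervalIntegral.integral_congr (fun t _ => this t),
        intervalIntegral.integral_const_mul, hKK]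
      field_simp
      rw [hK1, hNdef]
      ring
  · -- lower bound
    rintro J ⟨v, hd, h1, rfl⟩
    have hvK : ∫ t in (-1 : ℝ)..1, eval t v * eval t K = N := by
      rw [moment p v hd, h1, one_mul]
    have cv : Continuous fun t : ℝ => eval t v := Polynomial.continuous v
    have c1 : IntervalIntegrable (fun t : ℝ => (eval t v) ^ 2)
        MeasureTheory.volume (-1 : ℝ) 1 := (cv.pow 2).intervalIntegrable _ _
    have c2 : IntervalIntegrable (fun t : ℝ => (2 * (1 / K1)) * (eval t v * eval t K))
        MeasureTheory.volume (-1 : ℝ) 1 := (continuous_const.mul (cv.mul cK)).intervalIntegrable _ _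
    have c3 : IntervalIntegrable (fun t : ℝ => (1 / K1) ^ 2 * (eval t K * eval t K))
        MeasureTheory.volume (-1 : ℝ) 1 := (continuous_const.mul (cK.mul cK)).intervalIntegrable _ _
    have expand : ∫ t in (-1 : ℝ)..1, (eval t v - (1 / K1) * eval t K) ^ 2
        = (∫ t in (-1 : ℝ)..1, (eval t v) ^ 2)
          - (∫ t in (-1 : ℝ)..1, (2 * (1 / K1)) * (eval t v * eval t K))
          + ∫ t in (-1 : ℝ)..1, (1 / K1) ^ 2 * (eval t K * eval t K) := by
      rw [← intervalIntegral.integral_sub c1 c2, ← intervalIntegral.integral_add (c1.sub c2) c3]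
      refine intervalIntegral.integral_congr fun t _ => by ring
    have hnn : (0 : ℝ) ≤ ∫ t in (-1 : ℝ)..1, (eval t v - (1 / K1) * eval t K) ^ 2 := by
      refine intervalIntegral.integral_nonneg (by norm_num) fun t _ => by positivity
    rw [expand, intervalIntegral.integral_const_mul, intervalIntegral.integral_const_mul,
      hvK, hKK] at hnn
    have key : N / K1 ≤ ∫ t in (-1 : ℝ)..1, (eval t v) ^ 2 := by
      have h2 : (1 / K1) ^ 2 * (K1 * N) = N / K1 := by field_simp
      have h3 : 2 * (1 / K1) * N = 2 * (N / K1) := by ring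
      nlinarith [hnn]
    rw [harith] at key
    have : 1 / ((p : ℝ) + 1) ^ 2 = (1 / 2) * (2 / ((p : ℝ) + 1) ^ 2) := by ring
    rw [this]
    linarith
end

section
/- Let g : [0,π] → ℝ be twice continuously differentiable with |g''(ξ)| ≤ Ψ for all ξ, and suppose g(kπ/m) ≥ −1 for all integers k with 0 ≤ k ≤ m. Then g(ξ) ≥ −1 − π²Ψ/(8m²) for all ξ ∈ [0,π]. -/
open Real in
lemma subinterval_lower_bound (g : ℝ → ℝ) (Ψ a b : ℝ) (hab : a < b) (h0 : 0 ≤ a)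
    (hbπ : b ≤ π)
    (hg : ContDiffOn ℝ 2 g (Set.Icc 0 π))
    (hΨ : ∀ ξ ∈ Set.Icc (0 : ℝ) π,
      |iteratedDerivWithin 2 g (Set.Icc 0 π) ξ| ≤ Ψ)
    (hΨ0 : 0 ≤ Ψ)
    (ha : -1 ≤ g a) (hb : -1 ≤ g b) :
    ∀ x ∈ Set.Icc a b, -1 - Ψ * (b - a) ^ 2 / 8 ≤ g x := by
  set s : Set ℝ := Set.Icc 0 π with hs
  have hsub : Set.Icc a b ⊆ s := Set.Icc_subset_Icc h0 hbπ
  have hus : UniqueDiffOn ℝ s := uniqueDiffOn_Icc Real.pi_pos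
  have hg1 : DifferentiableOn ℝ g s := hg.differentiableOn (by norm_num)
  have hg2 : DifferentiableOn ℝ (derivWithin g s) s :=
    (hg.derivWithin (m := 1) hus (by norm_num)).differentiableOn (by norm_num)
  -- the perturbed function
  set φ : ℝ → ℝ := fun x => g x + Ψ / 2 * ((x - a) * (b - x)) with hφ
  have hintD : interior (Set.Icc a b) = Set.Ioo a b := interior_Icc
  have hIoo : Set.Ioo a b ⊆ s := fun x hx => hsub (Set.Ioo_subset_Icc_self hx)
  have hconc : ConcaveOn ℝ (Set.Icc a b) φ := by
    apply concaveOn_of_hasDerivWithinAt2_nonpos (convex_Icc a b)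
      (f' := fun x => derivWithin g s x + Ψ / 2 * (a + b - 2 * x))
      (f'' := fun x => iteratedDerivWithin 2 g s x - Ψ)
    · -- continuity of φ
      apply ContinuousOn.add ((hg.continuousOn).mono hsub)
      fun_prop
    · -- first derivative
      intro x hx
      rw [hintD] at hx ⊢
      have hgx : HasDerivWithinAt g (derivWithin g s x) (Set.Ioo a b) x :=
        ((hg1 x (hIoo hx)).hasDerivWithinAt).mono hIoo
      have hq : HasDerivWithinAt (fun y => Ψ / 2 * ((y - a) * (b - y)))
          (Ψ / 2 * (a + b - 2 * x)) (Set.Ioo a b) x := by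
        have : HasDerivAt (fun y => Ψ / 2 * ((y - a) * (b - y)))
            (Ψ / 2 * (a + b - 2 * x)) x := by
          have hd : HasDerivAt (fun y : ℝ => Ψ / 2 * ((y - a) * (b - y)))
              (Ψ / 2 * (1 * (b - x) + (x - a) * (0 - 1))) x :=
            (((hasDerivAt_id x).sub_const a).mul ((hasDerivAt_const x b).sub
              (hasDerivAt_id x))).const_mul (Ψ / 2)
          have heq : Ψ / 2 * (a + b - 2 * x) = Ψ / 2 * (1 * (b - x) + (x - a) * (0 - 1)) := by
            ring
          rw [heq]
          exact hd
        exact this.hasDerivWithinAt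
      exact hgx.add hq
    · -- second derivative
      intro x hx
      rw [hintD] at hx ⊢
      have hxs : x ∈ s := hIoo hx
      have hg'x : HasDerivWithinAt (derivWithin g s)
          (derivWithin (derivWithin g s) s x) (Set.Ioo a b) x :=
        ((hg2 x hxs).hasDerivWithinAt).mono hIoo
      have hiter : iteratedDerivWithin 2 g s x = derivWithin (derivWithin g s) s x := by
        rw [show (2 : ℕ) = 1 + 1 from rfl, iteratedDerivWithin_succ',
          iteratedDerivWithin_one]
      have hq : HasDerivWithinAt (fun y => Ψ / 2 * (a + b - 2 * y)) (-Ψ) (Set.Ioo a b) x := by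
        have hd : HasDerivAt (fun y : ℝ => Ψ / 2 * (a + b - 2 * y))
            (Ψ / 2 * -(2 * 1)) x :=
          (((hasDerivAt_id x).const_mul (2 : ℝ)).const_sub (a + b)).const_mul (Ψ / 2)
        have heq : (-Ψ : ℝ) = Ψ / 2 * -(2 * 1) := by ring
        rw [heq]
        exact hd.hasDerivWithinAt
      have := hg'x.add hq
      rw [← hiter] at this
      rw [show iteratedDerivWithin 2 g s x - Ψ = iteratedDerivWithin 2 g s x + -Ψ by ring]
      exact this
    · -- nonpositivity
      intro x hx
      rw [hintD] at hx
      have := hΨ x (hIoo hx)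
      have h1 := abs_le.mp this
      linarith [h1.2]
  intro x hx
  obtain ⟨hax, hxb⟩ := hx
  have hba : (0:ℝ) < b - a := by linarith
  set t : ℝ := (b - x) / (b - a) with ht
  set u : ℝ := (x - a) / (b - a) with hu
  have ht0 : 0 ≤ t := div_nonneg (by linarith) hba.le
  have hu0 : 0 ≤ u := div_nonneg (by linarith) hba.le
  have htu : t + u = 1 := by rw [ht, hu, ← add_div, div_eq_one_iff_eq hba.ne']; ring
  have hcomb : t • a + u • b = x := by
    simp only [smul_eq_mul, ht, hu]
    rw [div_mul_eq_mul_div, div_mul_eq_mul_div, ← add_div, div_eq_iff hba.ne']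
    ring
  have hkey := hconc.2 (Set.left_mem_Icc.mpr hab.le) (Set.right_mem_Icc.mpr hab.le)
    ht0 hu0 htu
  rw [hcomb] at hkey
  have hφa : φ a = g a := by show g a + Ψ / 2 * ((a - a) * (b - a)) = g a; ring
  have hφb : φ b = g b := by show g b + Ψ / 2 * ((b - a) * (b - b)) = g b; ring
  have h1 : -1 ≤ φ x := by
    have : t * (-1) + u * (-1) ≤ t * φ a + u * φ b := by
      apply add_le_add
      · exact mul_le_mul_of_nonneg_left (by rw [hφa]; exact ha) ht0
      · exact mul_le_mul_of_nonneg_left (by rw [hφb]; exact hb) hu0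
    calc -1 = (t + u) * (-1) := by rw [htu]; ring
      _ = t * (-1) + u * (-1) := by ring
      _ ≤ t * φ a + u * φ b := this
      _ ≤ φ x := hkey
  have h2 : Ψ / 2 * ((x - a) * (b - x)) ≤ Ψ * (b - a) ^ 2 / 8 := by
    have hprod : (x - a) * (b - x) ≤ (b - a) ^ 2 / 4 := by nlinarith [sq_nonneg (a + b - 2 * x)]
    nlinarith
  simp only [hφ] at h1
  linarith

open Real in
theorem sampled_lower_bound (g : ℝ → ℝ) (Ψ : ℝ) (m : ℕ) (hm : 0 < m)
    (hg : ContDiffOn ℝ 2 g (Set.Icc 0 π))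
    (hΨ : ∀ ξ ∈ Set.Icc (0 : ℝ) π,
      |iteratedDerivWithin 2 g (Set.Icc 0 π) ξ| ≤ Ψ)
    (hsample : ∀ k : ℕ, k ≤ m → -1 ≤ g ((k : ℝ) * π / m)) :
    ∀ ξ ∈ Set.Icc (0 : ℝ) π,
      -1 - π ^ 2 * Ψ / (8 * (m : ℝ) ^ 2) ≤ g ξ := by
  intro ξ hξ
  obtain ⟨hξ0, hξπ⟩ := hξ
  have hm' : (0:ℝ) < m := Nat.cast_pos.mpr hm
  have hΨ0 : 0 ≤ Ψ := le_trans (abs_nonneg _) (hΨ 0 ⟨le_refl 0, Real.pi_pos.le⟩)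
  set k : ℕ := min (⌊ξ * m / π⌋₊) (m - 1) with hk
  have hk1 : k + 1 ≤ m := by
    have : k ≤ m - 1 := min_le_right _ _
    omega
  have hkm : (k:ℝ) + 1 ≤ m := by exact_mod_cast hk1
  set a : ℝ := (k : ℝ) * π / m with hadef
  set b : ℝ := ((k:ℝ) + 1) * π / m with hbdef
  have hπ := Real.pi_pos
  have hab : a < b := by
    rw [hadef, hbdef, div_lt_div_iff₀ hm' hm']
    nlinarith
  have h0a : 0 ≤ a := by positivity
  have hbπ : b ≤ π := by
    rw [hbdef, div_le_iff₀ hm']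
    nlinarith
  have ha : -1 ≤ g a := hsample k (by omega)
  have hb : -1 ≤ g b := by
    have := hsample (k + 1) hk1
    push_cast at this
    exact this
  have hfl : (⌊ξ * m / π⌋₊ : ℝ) ≤ ξ * m / π := Nat.floor_le (by positivity)
  have hax : a ≤ ξ := by
    have hkfl : (k : ℝ) ≤ ξ * m / π := by
      have : (k : ℝ) ≤ (⌊ξ * m / π⌋₊ : ℝ) := by exact_mod_cast min_le_left _ _
      linarith
    rw [hadef, div_le_iff₀ hm']
    rw [le_div_iff₀ hπ] at hkfl
    linarith
  have hξb : ξ ≤ b := by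
    by_cases hc : ⌊ξ * m / π⌋₊ ≤ m - 1
    · have hkeq : k = ⌊ξ * m / π⌋₊ := by omega
      have hlt : ξ * m / π < (k : ℝ) + 1 := by
        rw [hkeq]; exact Nat.lt_floor_add_one _
      rw [hbdef, le_div_iff₀ hm']
      rw [div_lt_iff₀ hπ] at hlt
      nlinarith
    · have hkeq : k = m - 1 := by omega
      have hbb : b = π := by
        rw [hbdef, hkeq]
        have : ((m - 1 : ℕ) : ℝ) = (m : ℝ) - 1 := by
          push_cast [Nat.cast_sub hm]; ring
        rw [this]
        field_simp
        ring
      rw [hbb]; exact hξπ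
  have hmain := subinterval_lower_bound g Ψ a b hab h0a hbπ hg hΨ hΨ0 ha hb ξ ⟨hax, hξb⟩
  have hba : b - a = π / m := by rw [hadef, hbdef]; ring
  have heq : Ψ * (b - a) ^ 2 / 8 = π ^ 2 * Ψ / (8 * (m : ℝ) ^ 2) := by
    rw [hba]
    field_simp
  linarith [hmain, heq.le]
end

section
/- Let φ_L, φ, φ_R : [−1,1] → ℝ be polynomials of degree at most p, let m be a positive multiple of p, and suppose φ_L(t) ≤ φ(t) ≤ φ_R(t) at all m+1 Chebyshev–Gauss–Lobatto points t_k = −cos(kπ/m), k = 0,…,m, and sup_{t∈[−1,1]}(φ_R(t) − φ_L(t)) ≤ C. Then for all t ∈ [−1,1]: φ(t) ≥ φ_L(t) − (π²C/8)·√p·(p/m)² and φ(t) ≤ φ_R(t) + (π²C/8)·√p·(p/m)². -/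
set_option maxHeartbeats 1000000
open Polynomial Polynomial.Chebyshev Real Finset

theorem chebT_coeff (n : ℕ) :
    (∀ N : ℕ, n < N → (T ℝ (n:ℤ)).coeff N = 0) ∧
    (T ℝ (n:ℤ)).coeff n = if n = 0 then 1 else 2^(n-1) := by
  induction n using Nat.strong_induction_on with
  | _ n ih =>
    match n with
    | 0 => simp [T_zero, Polynomial.coeff_one]; intro N h; omega
    | 1 =>
      constructor
      · intro N h
        simp [T_one, Polynomial.coeff_X]
        omega
      · simp [T_one]
    | (n+2) =>
      have h1 := ih (n+1) (by omega)
      have h0 := ih n (by omega)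
      have hrec : T ℝ ((n:ℤ)+2) = 2 * X * T ℝ ((n:ℤ)+1) - T ℝ (n:ℤ) := T_add_two ℝ n
      have hcast : ((n+2 : ℕ) : ℤ) = (n:ℤ) + 2 := by push_cast; ring
      have hcast1 : ((n+1 : ℕ) : ℤ) = (n:ℤ) + 1 := by push_cast; ring
      constructor
      · intro N h
        rw [hcast, hrec]
        have hN : 1 ≤ N := by omega
        have e1 : (2 * X * T ℝ ((n:ℤ)+1)).coeff N = 2 * (T ℝ ((n:ℤ)+1)).coeff (N-1) := by
          rw [mul_assoc, Polynomial.coeff_ofNat_mul]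
          congr 1
          rw [← Nat.succ_pred_eq_of_pos hN, Polynomial.coeff_X_mul]
          simp
        rw [Polynomial.coeff_sub, e1, ← hcast1, h1.1 (N-1) (by omega), h0.1 N (by omega)]
        ring
      · rw [hcast, hrec]
        have e1 : (2 * X * T ℝ ((n:ℤ)+1)).coeff (n+2) = 2 * (T ℝ ((n:ℤ)+1)).coeff (n+1) := by
          rw [mul_assoc, Polynomial.coeff_ofNat_mul, show n+2 = (n+1)+1 from rfl,
            Polynomial.coeff_X_mul]
        rw [Polynomial.coeff_sub, e1, ← hcast1, h1.2, h0.1 (n+2) (by omega)]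
        simp [pow_succ]
        ring


theorem cheb_expand : ∀ (n : ℕ) (q : ℝ[X]), q.natDegree ≤ n →
    ∃ β : ℕ → ℝ, ∀ θ : ℝ, q.eval (Real.cos θ) =
      ∑ j ∈ Finset.range (n+1), β j * Real.cos (j * θ) := by
  intro n
  induction n with
  | zero =>
    intro q hq
    refine ⟨fun _ => q.coeff 0, fun θ => ?_⟩
    rw [Polynomial.eq_C_of_natDegree_le_zero hq]
    simp
  | succ n ih =>
    intro q hq
    set c := q.coeff (n+1) with hc
    set q' := q - Polynomial.C (c / 2^n) * T ℝ ((n:ℤ)+1) with hq'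
    have hTc := chebT_coeff (n+1)
    have hcast1 : ((n+1 : ℕ) : ℤ) = (n:ℤ) + 1 := by push_cast; ring
    have hdeg : q'.natDegree ≤ n := by
      rw [Polynomial.natDegree_le_iff_coeff_eq_zero]
      intro N hN
      rw [hq', Polynomial.coeff_sub, Polynomial.coeff_C_mul, ← hcast1]
      rcases eq_or_lt_of_le (Nat.succ_le_of_lt hN) with h | h
      · rw [← h, hTc.2]
        simp [hc]
      · rw [hTc.1 N h, Polynomial.coeff_eq_zero_of_natDegree_lt (lt_of_le_of_lt hq h)]
        ring
    obtain ⟨β', hβ'⟩ := ih q' hdeg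
    refine ⟨fun j => if j = n+1 then c / 2^n else β' j, fun θ => ?_⟩
    have hev : q.eval (Real.cos θ) = q'.eval (Real.cos θ) + (c / 2^n) * Real.cos ((n+1) * θ) := by
      rw [hq']
      have := Polynomial.Chebyshev.T_real_cos θ ((n:ℤ)+1)
      simp only [Polynomial.eval_sub, Polynomial.eval_mul, Polynomial.eval_C, this]
      push_cast
      ring
    rw [hev, hβ',
      Finset.sum_range_succ (fun j => (if j = n+1 then c / 2^n else β' j) * Real.cos (j * θ)) (n+1)]
    simp only [if_pos rfl]
    congr 1
    · apply Finset.sum_congr rfl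
      intro j hj
      rw [if_neg (by simp at hj; omega)]
    · push_cast
      simp


theorem cos_sum_zero (m n : ℕ) (hm : 0 < m) (h0 : 0 < n) (h2 : n < 2*m) :
    ∑ k ∈ Finset.range (2*m), Real.cos ((n:ℝ) * k * π / m) = 0 := by
  set θ : ℝ := (n:ℝ) * π / m with hθ
  set z : ℂ := Complex.exp (θ * Complex.I) with hz
  have hmpos : (0:ℝ) < m := by exact_mod_cast hm
  have hθpos : 0 < θ := by
    apply div_pos (mul_pos (by exact_mod_cast h0) Real.pi_pos) hmpos
  have hθlt : θ < 2 * π := by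
    rw [hθ, div_lt_iff₀ hmpos]
    calc (n:ℝ) * π = π * n := by ring
    _ < π * (2*m) := by
        apply mul_lt_mul_of_pos_left _ Real.pi_pos
        exact_mod_cast h2
    _ = 2 * π * m := by ring
  have hz1 : z ≠ 1 := by
    rw [hz, Ne, Complex.exp_eq_one_iff]
    rintro ⟨k, hk⟩
    have : θ = k * (2*π) := by
      have := congrArg Complex.im hk
      simpa using this
    rcases lt_trichotomy (k:ℝ) 1 with h | h | h
    · have hk0 : (k:ℝ) ≤ 0 := by
        have : k < 1 := by exact_mod_cast h
        have : k ≤ 0 := by omega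
        exact_mod_cast this
      nlinarith [Real.pi_pos]
    · nlinarith
    · nlinarith [Real.pi_pos]
  have hzpow : ∀ k : ℕ, z ^ k = Complex.exp ((k * θ : ℝ) * Complex.I) := by
    intro k
    rw [hz, ← Complex.exp_nat_mul]
    push_cast
    ring_nf
  have hsum : ∑ k ∈ Finset.range (2*m), z ^ k = 0 := by
    rw [geom_sum_eq hz1]
    have : z ^ (2*m) = 1 := by
      rw [hzpow (2*m)]
      have : ((2*m : ℕ) * θ : ℝ) = (n:ℝ) * (2 * π) := by
        rw [hθ]
        field_simp
        norm_cast
        ring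
      rw [this]
      push_cast
      rw [show ((n:ℂ) * (2 * (π:ℂ)) * Complex.I) = (n:ℤ) * (2 * (π:ℂ) * Complex.I) by push_cast; ring]
      exact Complex.exp_int_mul_two_pi_mul_I n
    rw [this]
    simp
  have := congrArg Complex.re hsum
  rw [Complex.re_sum] at this
  simp only [hzpow] at this
  simp only [Complex.zero_re] at this
  rw [← this]
  apply Finset.sum_congr rfl
  intro k _
  rw [Complex.exp_ofReal_mul_I_re]
  congr 1
  rw [hθ]
  ring


noncomputable def cglw (m k : ℕ) : ℝ := if k = 0 ∨ k = m then 1/2 else 1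


theorem cglw_sum (m : ℕ) (hm : 0 < m) : ∑ k ∈ Finset.range (m+1), cglw m k = m := by
  obtain ⟨m', rfl⟩ := Nat.exists_eq_succ_of_ne_zero hm.ne'
  rw [Finset.sum_range_succ, Finset.sum_range_succ']
  have h1 : ∀ k ∈ Finset.range m', cglw (m'+1) (k+1) = 1 := by
    intro k hk
    simp only [Finset.mem_range] at hk
    simp [cglw]
    omega
  rw [Finset.sum_congr rfl h1]
  simp [cglw]
  push_cast
  ring


theorem D_zero (m : ℕ) (hm : 0 < m) (n : ℕ) (hn : n = 0 ∨ n = 2*m) :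
    ∑ k ∈ Finset.range (m+1), cglw m k * Real.cos ((n:ℝ) * k * π / m) = m := by
  have hc : ∀ k ∈ Finset.range (m+1), cglw m k * Real.cos ((n:ℝ) * k * π / m) = cglw m k := by
    intro k _
    have : Real.cos ((n:ℝ) * k * π / m) = 1 := by
      rcases hn with rfl | rfl
      · simp
      · have : ((2*m : ℕ) : ℝ) * k * π / m = (k:ℝ) * (2 * π) := by
          have hm' : (m:ℝ) ≠ 0 := by positivity
          push_cast
          field_simp
        rw [this, Real.cos_nat_mul_two_pi]
    rw [this, mul_one]
  rw [Finset.sum_congr rfl hc, cglw_sum m hm]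


theorem D_mid (m n : ℕ) (hm : 0 < m) (h0 : 0 < n) (h2 : n < 2*m) :
    ∑ k ∈ Finset.range (m+1), cglw m k * Real.cos ((n:ℝ) * k * π / m) = 0 := by
  have key : 2 * ∑ k ∈ Finset.range (m+1), cglw m k * Real.cos ((n:ℝ) * k * π / m)
      = ∑ k ∈ Finset.range (2*m), Real.cos ((n:ℝ) * k * π / m) := by
    have hsplit : Finset.range (2*m) = Finset.range (m+1) ∪ Finset.Ico (m+1) (2*m) := by
      rw [Finset.range_eq_Ico, Finset.range_eq_Ico, Finset.Ico_union_Ico_eq_Ico] <;> omega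
    rw [hsplit, Finset.sum_union (by
      rw [Finset.range_eq_Ico]
      exact Finset.Ico_disjoint_Ico_consecutive 0 (m+1) (2*m))]
    have hre : ∑ k ∈ Finset.Ico (m+1) (2*m), Real.cos ((n:ℝ) * k * π / m)
        = ∑ k ∈ Finset.Ico 1 m, Real.cos ((n:ℝ) * k * π / m) := by
      apply Finset.sum_nbij' (fun k => 2*m - k) (fun k => 2*m - k)
      · intro a ha; simp only [Finset.mem_Ico] at *; omega
      · intro a ha; simp only [Finset.mem_Ico] at *; omega
      · intro a ha; simp only [Finset.mem_Ico] at ha; omega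
      · intro a ha; simp only [Finset.mem_Ico] at ha; omega
      · intro a ha
        simp only [Finset.mem_Ico] at ha
        have hcast : ((2*m - a : ℕ) : ℝ) = 2*(m:ℝ) - a := by
          push_cast [Nat.cast_sub (by omega : a ≤ 2*m)]
          ring
        rw [hcast]
        have hm' : (m:ℝ) ≠ 0 := by positivity
        have : (n:ℝ) * (2*(m:ℝ) - a) * π / m = (n:ℝ) * (2*π) - (n:ℝ) * a * π / m := by
          field_simp
        rw [this, Real.cos_nat_mul_two_pi_sub]
    rw [hre]
    -- now: 2 * Σ_{range(m+1)} w_k c_k = Σ_{range(m+1)} c_k + Σ_{Ico 1 m} c_k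
    have hIco : ∑ k ∈ Finset.Ico 1 m, Real.cos ((n:ℝ) * k * π / m)
        = ∑ k ∈ Finset.range (m+1), Real.cos ((n:ℝ) * k * π / m)
          - Real.cos ((n:ℝ) * 0 * π / m) - Real.cos ((n:ℝ) * m * π / m) := by
      rw [Finset.sum_range_succ, Finset.range_eq_Ico,
        show Finset.Ico 0 m = Finset.Ico 0 1 ∪ Finset.Ico 1 m by
          rw [Finset.Ico_union_Ico_eq_Ico] <;> omega,
        Finset.sum_union (Finset.Ico_disjoint_Ico_consecutive 0 1 m)]
      simp
      ring
    rw [hIco, Finset.mul_sum]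
    have : ∀ k ∈ Finset.range (m+1),
        2 * (cglw m k * Real.cos ((n:ℝ) * k * π / m))
        = Real.cos ((n:ℝ) * k * π / m) + Real.cos ((n:ℝ) * k * π / m)
          - (if k = 0 ∨ k = m then Real.cos ((n:ℝ) * k * π / m) else 0) := by
      intro k _
      by_cases h : k = 0 ∨ k = m <;> simp [cglw, h] <;> ring
    rw [Finset.sum_congr rfl this]
    rw [Finset.sum_sub_distrib, Finset.sum_add_distrib]
    have hif : ∑ k ∈ Finset.range (m+1), (if k = 0 ∨ k = m then Real.cos ((n:ℝ) * k * π / m) else 0)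
        = Real.cos ((n:ℝ) * 0 * π / m) + Real.cos ((n:ℝ) * m * π / m) := by
      rw [Finset.sum_range_succ, if_pos (Or.inr rfl)]
      have : ∀ k ∈ Finset.range m, (if k = 0 ∨ k = m then Real.cos ((n:ℝ) * k * π / m) else 0)
          = (if k = 0 then Real.cos ((n:ℝ) * k * π / m) else 0) := by
        intro k hk
        simp only [Finset.mem_range] at hk
        by_cases h : k = 0 <;> simp [h] <;> omega
      rw [Finset.sum_congr rfl this, Finset.sum_ite_eq' (Finset.range m) 0, if_pos (by simp [hm])]
      norm_num
    rw [hif]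
    ring
  have h3 := cos_sum_zero m n hm h0 h2
  linarith [key]


theorem prod_to_sum (x y : ℝ) : Real.cos x * Real.cos y = (Real.cos (x+y) + Real.cos (x-y))/2 := by
  rw [Real.cos_add, Real.cos_sub]; ring


theorem S_orth_aux (m j l : ℕ) (hm : 0 < m) (hl : l ≤ j) (hj : j ≤ m) :
    ∑ k ∈ Finset.range (m+1), cglw m k * (Real.cos ((j:ℝ) * k * π / m) * Real.cos ((l:ℝ) * k * π / m)) =
    if j = l then (if j = 0 ∨ j = m then (m:ℝ) else (m:ℝ)/2) else 0 := by
  have step : ∀ k ∈ Finset.range (m+1),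
      cglw m k * (Real.cos ((j:ℝ) * k * π / m) * Real.cos ((l:ℝ) * k * π / m))
      = (cglw m k * Real.cos (((j+l : ℕ):ℝ) * k * π / m)
        + cglw m k * Real.cos (((j-l : ℕ):ℝ) * k * π / m))/2 := by
    intro k _
    rw [prod_to_sum]
    have e1 : ((j:ℝ) * k * π / m + (l:ℝ) * k * π / m) = ((j+l : ℕ):ℝ) * k * π / m := by
      push_cast; ring
    have e2 : ((j:ℝ) * k * π / m - (l:ℝ) * k * π / m) = ((j-l : ℕ):ℝ) * k * π / m := by
      push_cast [Nat.cast_sub hl]; ring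
    rw [e1, e2]; ring
  rw [Finset.sum_congr rfl step, ← Finset.sum_div, Finset.sum_add_distrib]
  rcases eq_or_lt_of_le hl with rfl | hlt
  · -- j = l
    rw [if_pos rfl]
    have h2 : ∑ k ∈ Finset.range (m+1), cglw m k * Real.cos (((l-l : ℕ):ℝ) * k * π / m) = m := by
      apply D_zero m hm _ (Or.inl (by omega))
    by_cases hj0 : l = 0 ∨ l = m
    · rw [if_pos hj0, h2, D_zero m hm (l+l) (by omega)]
      ring
    · rw [if_neg hj0, h2, D_mid m (l+l) hm (by omega) (by omega)]
      ring
  · rw [if_neg (by omega)]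
    rw [D_mid m (j+l) hm (by omega) (by omega), D_mid m (j-l) hm (by omega) (by omega)]
    ring


theorem S_orth (m j l : ℕ) (hm : 0 < m) (hj : j ≤ m) (hl : l ≤ m) :
    ∑ k ∈ Finset.range (m+1), cglw m k * (Real.cos ((j:ℝ) * k * π / m) * Real.cos ((l:ℝ) * k * π / m)) =
    if j = l then (if j = 0 ∨ j = m then (m:ℝ) else (m:ℝ)/2) else 0 := by
  rcases le_total l j with h | h
  · exact S_orth_aux m j l hm h hj
  · have := S_orth_aux m l j hm h hl
    have hcomm : ∀ k ∈ Finset.range (m+1),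
        cglw m k * (Real.cos ((j:ℝ) * k * π / m) * Real.cos ((l:ℝ) * k * π / m))
        = cglw m k * (Real.cos ((l:ℝ) * k * π / m) * Real.cos ((j:ℝ) * k * π / m)) := by
      intro k _; ring
    rw [Finset.sum_congr rfl hcomm, this]
    by_cases hjl : j = l
    · subst hjl; rfl
    · rw [if_neg (Ne.symm hjl), if_neg hjl]


theorem parseval (m p : ℕ) (hm : 0 < m) (hpm : p ≤ m) (β : ℕ → ℝ) (C : ℝ)
    (hsamp : ∀ k : ℕ, k ≤ m →
      0 ≤ ∑ j ∈ Finset.range (p+1), β j * Real.cos ((j:ℝ) * ((k:ℝ) * π / m)) ∧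
      ∑ j ∈ Finset.range (p+1), β j * Real.cos ((j:ℝ) * ((k:ℝ) * π / m)) ≤ C) :
    ∑ j ∈ Finset.Icc 1 p, (β j)^2 ≤ C^2/2 := by
  set γ : ℕ → ℝ := fun j => if j = 0 then β 0 - C/2 else β j with hγ
  set c : ℕ → ℕ → ℝ := fun j k => Real.cos ((j:ℝ) * k * π / m) with hc
  set G : ℕ → ℝ := fun k => ∑ j ∈ Finset.range (p+1), γ j * c j k with hG
  have hGval : ∀ k : ℕ, G k = (∑ j ∈ Finset.range (p+1), β j * Real.cos ((j:ℝ) * ((k:ℝ) * π / m))) - C/2 := by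
    intro k
    have hcc : ∀ j : ℕ, c j k = Real.cos ((j:ℝ) * ((k:ℝ) * π / m)) := by
      intro j
      show Real.cos _ = _
      congr 1; ring
    calc G k = ∑ j ∈ Finset.range (p+1), γ j * Real.cos ((j:ℝ) * ((k:ℝ) * π / m)) :=
          Finset.sum_congr rfl (fun j _ => by rw [hcc])
      _ = _ := by
          rw [Finset.sum_range_succ' (fun j => γ j * Real.cos ((j:ℝ) * ((k:ℝ) * π / m))) p,
            Finset.sum_range_succ' (fun j => β j * Real.cos ((j:ℝ) * ((k:ℝ) * π / m))) p]
          have hγs : ∀ i : ℕ, γ (i+1) = β (i+1) := fun i => by simp [hγ]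
          simp only [hγs]
          simp [hγ]
          ring
  have hGbound : ∀ k : ℕ, k ≤ m → (G k)^2 ≤ (C/2)^2 := by
    intro k hk
    rw [hGval k]
    have h1 := (hsamp k hk).1
    have h2 := (hsamp k hk).2
    apply sq_le_sq'
    · linarith
    · linarith
  -- orthogonality expansion
  have key : ∑ k ∈ Finset.range (m+1), cglw m k * (G k)^2
      = ∑ j ∈ Finset.range (p+1), (γ j)^2 * (if j = 0 ∨ j = m then (m:ℝ) else (m:ℝ)/2) := by
    have e1 : ∀ k, cglw m k * (G k)^2
        = ∑ j ∈ Finset.range (p+1), ∑ l ∈ Finset.range (p+1),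
            γ j * γ l * (cglw m k * (c j k * c l k)) := by
      intro k
      rw [sq, hG, Finset.sum_mul_sum, Finset.mul_sum]
      apply Finset.sum_congr rfl
      intro j _
      rw [Finset.mul_sum]
      apply Finset.sum_congr rfl
      intro l _
      ring
    simp only [e1]
    rw [Finset.sum_comm]
    apply Finset.sum_congr rfl
    intro j hj
    rw [Finset.sum_comm]
    have e2 : ∀ l ∈ Finset.range (p+1),
        ∑ k ∈ Finset.range (m+1), γ j * γ l * (cglw m k * (c j k * c l k))
        = if j = l then γ j * γ l * (if j = 0 ∨ j = m then (m:ℝ) else (m:ℝ)/2) else 0 := by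
      intro l hl
      simp only [Finset.mem_range] at hj hl
      rw [← Finset.mul_sum, S_orth m j l hm (by omega) (by omega)]
      by_cases h : j = l
      · rw [if_pos h, if_pos h]
      · rw [if_neg h, if_neg h, mul_zero]
    rw [Finset.sum_congr rfl e2]
    have e3 : ∀ l ∈ Finset.range (p+1),
        (if j = l then γ j * γ l * (if j = 0 ∨ j = m then (m:ℝ) else (m:ℝ)/2) else 0)
        = (if j = l then (fun l' => γ j * γ l' * (if j = 0 ∨ j = m then (m:ℝ) else (m:ℝ)/2)) l else 0) := by
      intro l _; rfl
    rw [Finset.sum_congr rfl e3, Finset.sum_ite_eq (Finset.range (p+1)) j]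
    simp only [Finset.mem_range] at hj
    rw [if_pos (by simp; omega)]
    ring
  -- upper bound on quadratic form
  have upper : ∑ k ∈ Finset.range (m+1), cglw m k * (G k)^2 ≤ (m:ℝ) * (C/2)^2 := by
    calc ∑ k ∈ Finset.range (m+1), cglw m k * (G k)^2
        ≤ ∑ k ∈ Finset.range (m+1), cglw m k * (C/2)^2 := by
          apply Finset.sum_le_sum
          intro k hk
          simp only [Finset.mem_range] at hk
          have hw : 0 ≤ cglw m k := by unfold cglw; split <;> norm_num
          exact mul_le_mul_of_nonneg_left (hGbound k (by omega)) hw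
      _ = (m:ℝ) * (C/2)^2 := by rw [← Finset.sum_mul, cglw_sum m hm]
  -- lower bound
  have lower : ((m:ℝ)/2) * ∑ j ∈ Finset.Icc 1 p, (β j)^2
      ≤ ∑ j ∈ Finset.range (p+1), (γ j)^2 * (if j = 0 ∨ j = m then (m:ℝ) else (m:ℝ)/2) := by
    have hsub : Finset.Icc 1 p ⊆ Finset.range (p+1) := by
      intro x hx; simp only [Finset.mem_Icc] at hx; simp; omega
    calc ((m:ℝ)/2) * ∑ j ∈ Finset.Icc 1 p, (β j)^2
        = ∑ j ∈ Finset.Icc 1 p, (γ j)^2 * ((m:ℝ)/2) := by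
          rw [Finset.mul_sum]
          apply Finset.sum_congr rfl
          intro j hj
          simp only [Finset.mem_Icc] at hj
          rw [hγ]
          simp only [if_neg (by omega : ¬ j = 0)]
          ring
      _ ≤ ∑ j ∈ Finset.Icc 1 p, (γ j)^2 * (if j = 0 ∨ j = m then (m:ℝ) else (m:ℝ)/2) := by
          apply Finset.sum_le_sum
          intro j _
          apply mul_le_mul_of_nonneg_left _ (sq_nonneg _)
          split
          · have : (0:ℝ) < m := by exact_mod_cast hm
            linarith
          · exact le_rfl
      _ ≤ ∑ j ∈ Finset.range (p+1), (γ j)^2 * (if j = 0 ∨ j = m then (m:ℝ) else (m:ℝ)/2) := by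
          apply Finset.sum_le_sum_of_subset_of_nonneg hsub
          intro j _ _
          apply mul_nonneg (sq_nonneg _)
          split
          · positivity
          · positivity
  have hm' : (0:ℝ) < m := by exact_mod_cast hm
  rw [key] at upper
  nlinarith [lower, upper]


theorem dip (g g1 g2 : ℝ → ℝ) (hg1 : ∀ x, HasDerivAt g (g1 x) x)
    (hg2 : ∀ x, HasDerivAt g1 (g2 x) x) (B : ℝ) (hB : ∀ x, |g2 x| ≤ B)
    (a b ξ : ℝ) (hab : a < b) (ha : 0 ≤ g a) (hb : 0 ≤ g b) (hξ : ξ ∈ Set.Icc a b) :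
    -(B * (b-a)^2/8) ≤ g ξ := by
  have hB0 : 0 ≤ B := le_trans (abs_nonneg _) (hB 0)
  set u : ℝ → ℝ := fun x => g x + B/2 * ((x-a)*(b-x)) with hu
  set u1 : ℝ → ℝ := fun x => g1 x + B/2 * (a + b - 2*x) with hu1
  have hu1' : ∀ x, HasDerivAt u (u1 x) x := by
    intro x
    have h2 : HasDerivAt (fun x : ℝ => B/2 * ((x-a)*(b-x))) (B/2 * (a + b - 2*x)) x := by
      have : HasDerivAt (fun x : ℝ => (x-a)*(b-x)) (a + b - 2*x) x := by
        have := ((hasDerivAt_id' x).sub_const a).fun_mul ((hasDerivAt_const x b).fun_sub (hasDerivAt_id' x))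
        exact this.congr_deriv (by ring)
      simpa using this.const_mul (B/2)
    exact (hg1 x).add h2
  have hu2' : ∀ x, HasDerivAt u1 (g2 x - B) x := by
    intro x
    have h2 : HasDerivAt (fun x : ℝ => B/2 * (a + b - 2*x)) (-B) x := by
      have : HasDerivAt (fun x : ℝ => a + b - 2*x) (-2) x := by
        simpa using ((hasDerivAt_id x).const_mul 2).const_sub (a+b)
      have := this.const_mul (B/2)
      exact this.congr_deriv (by ring)
    have := (hg2 x).fun_add h2
    exact this.congr_deriv (by ring)
  have hderiv : deriv u = u1 := funext fun x => (hu1' x).deriv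
  have hconc : ConcaveOn ℝ Set.univ u := by
    apply concaveOn_of_deriv2_nonpos' convex_univ
    · exact fun x _ => (hu1' x).differentiableAt.differentiableWithinAt
    · rw [hderiv]
      exact fun x _ => (hu2' x).differentiableAt.differentiableWithinAt
    · intro x _
      have : deriv^[2] u x = g2 x - B := by
        rw [show deriv^[2] u = deriv (deriv u) from rfl, hderiv, (hu2' x).deriv]
      rw [this]
      have := abs_le.1 (hB x)
      linarith
  obtain ⟨hax, hxb⟩ := hξ
  -- write ξ as convex combination
  set t : ℝ := (b - ξ)/(b - a) with ht
  set s : ℝ := (ξ - a)/(b - a) with hs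
  have hba : (0:ℝ) < b - a := by linarith
  have ht0 : 0 ≤ t := by apply div_nonneg <;> linarith
  have hs0 : 0 ≤ s := by apply div_nonneg <;> linarith
  have hts : t + s = 1 := by rw [ht, hs]; field_simp; ring
  have hcomb : t • a + s • b = ξ := by
    simp only [smul_eq_mul]
    rw [ht, hs]
    field_simp
    ring
  have := hconc.2 (Set.mem_univ a) (Set.mem_univ b) ht0 hs0 hts
  rw [hcomb] at this
  have hua : u a = g a := by simp [hu]
  have hub : u b = g b := by simp [hu]
  have huξ : 0 ≤ u ξ := by
    refine le_trans ?_ this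
    rw [hua, hub]
    have := mul_nonneg ht0 ha
    have := mul_nonneg hs0 hb
    simp only [smul_eq_mul]
    linarith
  have hquad : (ξ - a) * (b - ξ) ≤ (b-a)^2/4 := by nlinarith [sq_nonneg (b + a - 2*ξ)]
  have : g ξ = u ξ - B/2 * ((ξ-a)*(b-ξ)) := by simp only [hu]; ring
  rw [this]
  have hm2 : B/2 * ((ξ-a)*(b-ξ)) ≤ B/2 * ((b-a)^2/4) :=
    mul_le_mul_of_nonneg_left hquad (by linarith)
  calc -(B * (b-a)^2/8) = 0 - B/2 * ((b-a)^2/4) := by ring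
    _ ≤ u ξ - B/2 * ((ξ-a)*(b-ξ)) := sub_le_sub huξ hm2


theorem cgl_lower (p m : ℕ) (hp : 0 < p) (hpm : p ≤ m) (hm : 0 < m) (q : Polynomial ℝ)
    (hdq : q.natDegree ≤ p) (C : ℝ) (hC : 0 ≤ C)
    (hs : ∀ k : ℕ, k ≤ m → 0 ≤ q.eval (Real.cos ((k:ℝ)*π/m)) ∧
      q.eval (Real.cos ((k:ℝ)*π/m)) ≤ C) :
    ∀ ξ : ℝ, ξ ∈ Set.Icc 0 π → -(π^2*C/8 * Real.sqrt p * ((p:ℝ)/m)^2) ≤ q.eval (Real.cos ξ) := by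
  obtain ⟨β, hβ⟩ := cheb_expand p q hdq
  have hm' : (0:ℝ) < m := by exact_mod_cast hm
  have hp' : (0:ℝ) < p := by exact_mod_cast hp
  -- Parseval
  have hpars : ∑ j ∈ Finset.Icc 1 p, (β j)^2 ≤ C^2/2 := by
    apply parseval m p hm hpm β C
    intro k hk
    rw [← hβ ((k:ℝ) * π / m)]
    have := hs k hk
    constructor
    · have e : (k:ℝ) * π / m = (k:ℝ) * π / m := rfl
      exact (hs k hk).1
    · exact (hs k hk).2
  -- the trig functions
  set g : ℝ → ℝ := fun ξ => ∑ j ∈ Finset.range (p+1), β j * Real.cos (j * ξ) with hg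
  set g1 : ℝ → ℝ := fun ξ => ∑ j ∈ Finset.range (p+1), β j * (-Real.sin (j * ξ) * j) with hg1
  set g2 : ℝ → ℝ := fun ξ => ∑ j ∈ Finset.range (p+1), β j * (-Real.cos (j * ξ) * j * j) with hg2
  have hd1 : ∀ x : ℝ, HasDerivAt g (g1 x) x := by
    intro x
    apply HasDerivAt.fun_sum
    intro j _
    have h1 : HasDerivAt (fun x : ℝ => (j:ℝ) * x) ((j:ℝ) * 1) x := (hasDerivAt_id x).const_mul (j:ℝ)
    have h2 := (Real.hasDerivAt_cos ((j:ℝ)*x)).comp x h1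
    have h3 : HasDerivAt (fun x : ℝ => Real.cos ((j:ℝ)*x)) (-Real.sin ((j:ℝ)*x) * j) x := by
      exact h2.congr_deriv (by ring)
    exact h3.const_mul (β j)
  have hd2 : ∀ x : ℝ, HasDerivAt g1 (g2 x) x := by
    intro x
    apply HasDerivAt.fun_sum
    intro j _
    have h1 : HasDerivAt (fun x : ℝ => (j:ℝ) * x) ((j:ℝ) * 1) x := (hasDerivAt_id x).const_mul (j:ℝ)
    have h2 := (Real.hasDerivAt_sin ((j:ℝ)*x)).comp x h1
    have h3 : HasDerivAt (fun x : ℝ => -Real.sin ((j:ℝ)*x) * (j:ℝ))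
        (-Real.cos ((j:ℝ)*x) * j * j) x := by
      have h4 : HasDerivAt (fun x : ℝ => Real.sin ((j:ℝ)*x)) (Real.cos ((j:ℝ)*x) * j) x := by
        exact h2.congr_deriv (by ring)
      have h5 := (h4.neg).mul_const (j:ℝ)
      exact h5.congr_deriv (by ring)
    exact h3.const_mul (β j)
  -- bound on second derivative
  set B : ℝ := Real.sqrt ((p:ℝ)^5 * (C^2/2)) with hB
  have hg2bound : ∀ x : ℝ, |g2 x| ≤ B := by
    intro x
    have step1 : |g2 x| ≤ ∑ j ∈ Finset.range (p+1), (j:ℝ)^2 * |β j| := by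
      refine le_trans (Finset.abs_sum_le_sum_abs _ _) (Finset.sum_le_sum ?_)
      intro j _
      rw [abs_mul]
      have : |(-Real.cos ((j:ℝ)*x) * j * j)| ≤ (j:ℝ)^2 := by
        rw [abs_mul, abs_mul]
        have h1 : |(-Real.cos ((j:ℝ)*x))| ≤ 1 := by
          rw [abs_neg]; exact Real.abs_cos_le_one _
        have h2 : |(j:ℝ)| = (j:ℝ) := abs_of_nonneg (by positivity)
        rw [h2]
        nlinarith [abs_nonneg (-Real.cos ((j:ℝ)*x))]
      calc |β j| * |(-Real.cos ((j:ℝ)*x) * j * j)| ≤ |β j| * (j:ℝ)^2 :=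
            mul_le_mul_of_nonneg_left this (abs_nonneg _)
        _ = (j:ℝ)^2 * |β j| := by ring
    have step2 : ∑ j ∈ Finset.range (p+1), (j:ℝ)^2 * |β j|
        = ∑ j ∈ Finset.Icc 1 p, (j:ℝ)^2 * |β j| := by
      rw [Finset.range_eq_Ico, show Finset.Ico 0 (p+1) = Finset.Ico 0 1 ∪ Finset.Ico 1 (p+1) by
          rw [Finset.Ico_union_Ico_eq_Ico] <;> omega,
        Finset.sum_union (Finset.Ico_disjoint_Ico_consecutive 0 1 (p+1))]
      simp [Finset.Ico_add_one_right_eq_Icc]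
    have step3 : (∑ j ∈ Finset.Icc 1 p, (j:ℝ)^2 * |β j|)^2 ≤ (p:ℝ)^5 * (C^2/2) := by
      calc (∑ j ∈ Finset.Icc 1 p, (j:ℝ)^2 * |β j|)^2
          ≤ (∑ j ∈ Finset.Icc 1 p, ((j:ℝ)^2)^2) * ∑ j ∈ Finset.Icc 1 p, |β j|^2 :=
            Finset.sum_mul_sq_le_sq_mul_sq _ _ _
        _ ≤ (p:ℝ)^5 * (C^2/2) := by
            have h1 : ∑ j ∈ Finset.Icc 1 p, ((j:ℝ)^2)^2 ≤ (p:ℝ)^5 := by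
              calc ∑ j ∈ Finset.Icc 1 p, ((j:ℝ)^2)^2 ≤ ∑ j ∈ Finset.Icc 1 p, (p:ℝ)^4 := by
                    apply Finset.sum_le_sum
                    intro j hj
                    simp only [Finset.mem_Icc] at hj
                    have hjp : (j:ℝ) ≤ p := by exact_mod_cast hj.2
                    have hj0 : (0:ℝ) ≤ j := by positivity
                    calc ((j:ℝ)^2)^2 = (j:ℝ)^4 := by ring
                      _ ≤ (p:ℝ)^4 := pow_le_pow_left₀ hj0 hjp 4
                _ = (p:ℝ) * (p:ℝ)^4 := by
                    rw [Finset.sum_const, Nat.card_Icc, Nat.add_sub_cancel, nsmul_eq_mul]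
                _ = (p:ℝ)^5 := by ring
            have h2 : ∑ j ∈ Finset.Icc 1 p, |β j|^2 ≤ C^2/2 := by
              calc ∑ j ∈ Finset.Icc 1 p, |β j|^2 = ∑ j ∈ Finset.Icc 1 p, (β j)^2 := by
                    apply Finset.sum_congr rfl
                    intro j _
                    exact sq_abs _
                _ ≤ C^2/2 := hpars
            have h3 : (0:ℝ) ≤ ∑ j ∈ Finset.Icc 1 p, ((j:ℝ)^2)^2 :=
              Finset.sum_nonneg fun j _ => by positivity
            have h4 : (0:ℝ) ≤ ∑ j ∈ Finset.Icc 1 p, |β j|^2 :=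
              Finset.sum_nonneg fun j _ => by positivity
            nlinarith
    have step4 : ∑ j ∈ Finset.Icc 1 p, (j:ℝ)^2 * |β j| ≤ B := by
      rw [hB]
      have hnn : (0:ℝ) ≤ ∑ j ∈ Finset.Icc 1 p, (j:ℝ)^2 * |β j| :=
        Finset.sum_nonneg fun j _ => by positivity
      have := Real.sqrt_le_sqrt (le_of_eq (rfl : (∑ j ∈ Finset.Icc 1 p, (j:ℝ)^2 * |β j|)^2 = _))
      calc ∑ j ∈ Finset.Icc 1 p, (j:ℝ)^2 * |β j|
          = Real.sqrt ((∑ j ∈ Finset.Icc 1 p, (j:ℝ)^2 * |β j|)^2) := (Real.sqrt_sq hnn).symm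
        _ ≤ Real.sqrt ((p:ℝ)^5 * (C^2/2)) := Real.sqrt_le_sqrt step3
    calc |g2 x| ≤ ∑ j ∈ Finset.range (p+1), (j:ℝ)^2 * |β j| := step1
      _ = ∑ j ∈ Finset.Icc 1 p, (j:ℝ)^2 * |β j| := step2
      _ ≤ B := step4
  -- B ≤ p^2 √p C
  have hBle : B ≤ (p:ℝ)^2 * Real.sqrt p * C := by
    rw [hB]
    have e : (p:ℝ)^2 * Real.sqrt p * C = Real.sqrt ((p:ℝ)^5 * C^2) := by
      rw [show ((p:ℝ)^5 * C^2) = ((p:ℝ)^2)^2 * ((p:ℝ) * C^2) by ring,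
        Real.sqrt_mul (by positivity), Real.sqrt_sq (by positivity),
        Real.sqrt_mul (by positivity), Real.sqrt_sq hC]
      ring
    rw [e]
    apply Real.sqrt_le_sqrt
    have h0 : (0:ℝ) ≤ (p:ℝ)^5 * C^2 := by positivity
    linarith
  -- main argument
  intro ξ hξ
  obtain ⟨hξ0, hξπ⟩ := hξ
  -- choose the interval
  set K : ℕ := min (Nat.floor (ξ * m / π)) (m-1) with hK
  have hKm : K ≤ m - 1 := min_le_right _ _
  have hKlt : K < m := by omega
  have hx0 : 0 ≤ ξ * m / π := by positivity
  have ha_le : (K:ℝ) * π / m ≤ ξ := by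
    rcases le_or_gt (Nat.floor (ξ * m / π)) (m-1) with h | h
    · have hKf : K = Nat.floor (ξ * m / π) := by rw [hK]; omega
      have hfl : (K:ℝ) ≤ ξ * m / π := by
        rw [hKf]; exact_mod_cast Nat.floor_le hx0
      rw [div_le_iff₀ hm']
      exact (le_div_iff₀ Real.pi_pos).1 hfl
    · have hKf : K = m - 1 := by rw [hK]; omega
      have hfl : (m:ℝ) ≤ ξ * m / π := by
        have h1 : (m:ℝ) ≤ (Nat.floor (ξ * m / π) : ℝ) := by exact_mod_cast by omega
        exact le_trans h1 (Nat.floor_le hx0)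
      have hξπ' : π ≤ ξ := by
        rw [le_div_iff₀ Real.pi_pos] at hfl
        calc π = (m:ℝ) * π / m := by field_simp
          _ ≤ ξ := by rw [div_le_iff₀ hm']; linarith
      have : ξ = π := le_antisymm hξπ hξπ'
      rw [hKf, this]
      rw [div_le_iff₀ hm']
      have hc : ((m - 1 : ℕ):ℝ) = (m:ℝ) - 1 := by
        push_cast [Nat.cast_sub (by omega : 1 ≤ m)]; ring
      rw [hc]
      nlinarith [Real.pi_pos]
  have hb_ge : ξ ≤ ((K+1):ℝ) * π / m := by
    rcases le_or_gt (Nat.floor (ξ * m / π)) (m-1) with h | h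
    · have hKf : K = Nat.floor (ξ * m / π) := by rw [hK]; omega
      have hfl : ξ * m / π < (K:ℝ) + 1 := by
        rw [hKf]
        exact Nat.lt_floor_add_one _
      have h2 : ξ * m < ((K:ℝ)+1) * π := by
        rw [div_lt_iff₀ Real.pi_pos] at hfl
        linarith
      rw [le_div_iff₀ hm']
      push_cast
      linarith
    · have hKf : K = m - 1 := by rw [hK]; omega
      have hc : (K:ℝ) + 1 = (m:ℝ) := by
        rw [hKf]
        push_cast [Nat.cast_sub (by omega : 1 ≤ m)]
        ring
      rw [hc]
      have : (m:ℝ) * π / m = π := by field_simp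
      rw [this]
      exact hξπ
  -- apply the dip lemma
  have hab : (K:ℝ)*π/m < ((K+1:ℕ):ℝ)*π/m := by
    apply (div_lt_div_iff_of_pos_right hm').2
    push_cast
    nlinarith [Real.pi_pos]
  have hga : 0 ≤ g ((K:ℝ)*π/m) := by
    have := (hs K (by omega)).1
    rwa [hβ ((K:ℝ)*π/m)] at this
  have hgb : 0 ≤ g (((K+1:ℕ):ℝ)*π/m) := by
    have := (hs (K+1) (by omega)).1
    rwa [hβ (((K+1:ℕ):ℝ)*π/m)] at this
  have hb_ge' : ξ ≤ ((K+1:ℕ):ℝ)*π/m := by push_cast; exact_mod_cast hb_ge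
  have hdip := dip g g1 g2 hd1 hd2 B hg2bound ((K:ℝ)*π/m) (((K+1:ℕ):ℝ)*π/m) ξ
    hab hga hgb ⟨ha_le, hb_ge'⟩
  rw [hβ ξ]
  refine le_trans ?_ hdip
  apply neg_le_neg
  have hba : ((K+1:ℕ):ℝ)*π/m - (K:ℝ)*π/m = π/m := by
    push_cast
    field_simp
    ring
  rw [hba]
  have h1 : B * (π/m)^2/8 ≤ ((p:ℝ)^2 * Real.sqrt p * C) * (π/m)^2/8 := by
    have hpm2 : (0:ℝ) ≤ (π/m)^2/8 := by positivity
    have := mul_le_mul_of_nonneg_right hBle hpm2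
    calc B * (π/m)^2/8 = B * ((π/m)^2/8) := by ring
      _ ≤ ((p:ℝ)^2 * Real.sqrt p * C) * ((π/m)^2/8) := this
      _ = ((p:ℝ)^2 * Real.sqrt p * C) * (π/m)^2/8 := by ring
  calc B * (π/m)^2/8 ≤ ((p:ℝ)^2 * Real.sqrt p * C) * (π/m)^2/8 := h1
    _ = π^2*C/8 * Real.sqrt p * ((p:ℝ)/m)^2 := by
        field_simp

open Real in
theorem cgl_sampling_bound (p m : ℕ) (hp : 0 < p)
    (hm : ∃ k : ℕ, 0 < k ∧ m = k * p)
    (φL φ φR : Polynomial ℝ)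
    (hdL : φL.natDegree ≤ p) (hd : φ.natDegree ≤ p) (hdR : φR.natDegree ≤ p)
    (C : ℝ)
    (hsample : ∀ k : ℕ, k ≤ m →
      φL.eval (-Real.cos ((k : ℝ) * π / m)) ≤ φ.eval (-Real.cos ((k : ℝ) * π / m)) ∧
      φ.eval (-Real.cos ((k : ℝ) * π / m)) ≤ φR.eval (-Real.cos ((k : ℝ) * π / m)))
    (hbox : ∀ t ∈ Set.Icc (-1 : ℝ) 1, φR.eval t - φL.eval t ≤ C) :
    ∀ t ∈ Set.Icc (-1 : ℝ) 1,
      φL.eval t - π ^ 2 * C / 8 * Real.sqrt p * ((p : ℝ) / m) ^ 2 ≤ φ.eval t ∧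
      φ.eval t ≤ φR.eval t + π ^ 2 * C / 8 * Real.sqrt p * ((p : ℝ) / m) ^ 2 := by
  obtain ⟨k0, hk0, hmk⟩ := hm
  have hm1 : 0 < m := by rw [hmk]; exact Nat.mul_pos hk0 hp
  have hpm : p ≤ m := by rw [hmk]; exact Nat.le_mul_of_pos_left p hk0
  have hm' : (0:ℝ) < m := by exact_mod_cast hm1
  have hcos_mem : ∀ x : ℝ, Real.cos x ∈ Set.Icc (-1:ℝ) 1 :=
    fun x => ⟨Real.neg_one_le_cos x, Real.cos_le_one x⟩
  have hC : 0 ≤ C := by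
    have h0 := hsample 0 (Nat.zero_le m)
    have ht0 : -Real.cos (((0:ℕ):ℝ) * π / m) = -1 := by norm_num
    rw [ht0] at h0
    have hb := hbox (-1) (by norm_num)
    linarith [h0.1, h0.2]
  have hsym : ∀ k : ℕ, k ≤ m →
      Real.cos ((k:ℝ)*π/m) = -Real.cos (((m-k : ℕ):ℝ)*π/m) := by
    intro k hk
    have hc : ((m-k:ℕ):ℝ) = (m:ℝ) - k := by push_cast [Nat.cast_sub hk]; ring
    rw [hc]
    have e : ((m:ℝ) - k)*π/m = π - (k:ℝ)*π/m := by field_simp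
    rw [e, Real.cos_pi_sub]
    ring
  have hsamples : ∀ (q : Polynomial ℝ),
      (∀ k : ℕ, k ≤ m → 0 ≤ q.eval (-Real.cos ((k:ℝ)*π/m)) ∧
        q.eval (-Real.cos ((k:ℝ)*π/m)) ≤ C) →
      (∀ k : ℕ, k ≤ m → 0 ≤ q.eval (Real.cos ((k:ℝ)*π/m)) ∧
        q.eval (Real.cos ((k:ℝ)*π/m)) ≤ C) := by
    intro q hq k hk
    rw [hsym k hk]
    exact hq (m-k) (Nat.sub_le m k)
  -- lower side
  have hdlo : (φ - φL).natDegree ≤ p :=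
    le_trans (Polynomial.natDegree_sub_le _ _) (max_le hd hdL)
  have hslo := hsamples (φ - φL) (by
    intro k hk
    have h1 := hsample k hk
    have hb := hbox (-Real.cos ((k:ℝ)*π/m)) (by
      have := hcos_mem (π - (k:ℝ)*π/m)
      rwa [Real.cos_pi_sub] at this)
    simp only [Polynomial.eval_sub]
    constructor
    · linarith [h1.1]
    · linarith [h1.2])
  have hlo := cgl_lower p m hp hpm hm1 (φ - φL) hdlo C hC hslo
  -- upper side
  have hdhi : (φR - φ).natDegree ≤ p :=
    le_trans (Polynomial.natDegree_sub_le _ _) (max_le hdR hd)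
  have hshi := hsamples (φR - φ) (by
    intro k hk
    have h1 := hsample k hk
    have hb := hbox (-Real.cos ((k:ℝ)*π/m)) (by
      have := hcos_mem (π - (k:ℝ)*π/m)
      rwa [Real.cos_pi_sub] at this)
    simp only [Polynomial.eval_sub]
    constructor
    · linarith [h1.2]
    · linarith [h1.1])
  have hhi := cgl_lower p m hp hpm hm1 (φR - φ) hdhi C hC hshi
  intro t ht
  have hξmem : Real.arccos t ∈ Set.Icc 0 π := ⟨Real.arccos_nonneg t, Real.arccos_le_pi t⟩
  have hct : Real.cos (Real.arccos t) = t := Real.cos_arccos ht.1 ht.2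
  have h1 := hlo (Real.arccos t) hξmem
  have h2 := hhi (Real.arccos t) hξmem
  rw [hct] at h1 h2
  simp only [Polynomial.eval_sub] at h1 h2
  constructor
  · linarith
  · linarith
end
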